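/- Let p be a prime and G = ℤ/p^{λ₁} × ℤ/p^{λ₂} × ℤ/p^{λ₃} with λ₁ ≥ λ₂ ≥ λ₃ ≥ 1. Writing f(a,b,c) for the number of subgroups of ℤ/p^a × ℤ/p^b × ℤ/p^c, the factorization number satisfies F₂(G) = −p³f(λ₁−1,λ₂−1,λ₃−1)² + p(f(λ₁−1,λ₂−1,λ₃)² + p·f(λ₁−1,λ₂,λ₃−1)² + p²·f(λ₁,λ₂−1,λ₃−1)²) − (f(λ₁−1,λ₂,λ₃)² + p·f(λ₁,λ₂−1,λ₃)² + p²·f(λ₁,λ₂,λ₃−1)²) + f(λ₁,λ₂,λ₃)². -/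

import Mathlib

/-- The factorization number of an additive abelian group: the number of ordered
pairs `(A, B)` of subgroups with `A + B = G`. -/
noncomputable def F2 (G : Type*) [AddCommGroup G] : ℕ :=
  Nat.card {x : AddSubgroup G × AddSubgroup G // x.1 ⊔ x.2 = ⊤}

/-- `f p a b c` is the total number of subgroups of `ℤ/p^a × ℤ/p^b × ℤ/p^c`. -/
noncomputable def f (p a b c : ℕ) : ℕ :=
  Nat.card (AddSubgroup (ZMod (p ^ a) × ZMod (p ^ b) × ZMod (p ^ c)))

open Function AddSubgroup

section Generic
variable {M N : Type*} [AddCommGroup M] [AddCommGroup N]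

/-- Transport the number of subgroups along an additive equivalence. -/
lemma cardSub_congr (e : M ≃+ N) :
    Nat.card (AddSubgroup M) = Nat.card (AddSubgroup N) := by
  refine Nat.card_congr
    { toFun := fun A => A.map e.toAddMonoidHom
      invFun := fun B => B.map e.symm.toAddMonoidHom
      left_inv := fun A => by
        ext x
        simp [AddSubgroup.mem_map]
      right_inv := fun B => by
        ext x
        simp [AddSubgroup.mem_map] }

/-- The subgroups contained in `H` correspond to the subgroups of `H`. -/
noncomputable def subLEEquiv (H : AddSubgroup M) :
    {A : AddSubgroup M // A ≤ H} ≃ AddSubgroup ↥H where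
  toFun A := (A : AddSubgroup M).addSubgroupOf H
  invFun B := ⟨B.map H.subtype, by
    rintro x ⟨y, -, rfl⟩; exact y.2⟩
  left_inv := by
    rintro ⟨A, hA⟩
    ext x
    simp only [addSubgroupOf_map_subtype]
    exact ⟨fun h => h.1, fun h => ⟨h, hA h⟩⟩
  right_inv := fun B =>
    comap_map_eq_self_of_injective H.subtype_injective B

lemma card_map_subtype (H : AddSubgroup M) (B : AddSubgroup ↥H) :
    Nat.card (B.map H.subtype) = Nat.card B :=
  (Nat.card_congr (B.equivMapOfInjective H.subtype H.subtype_injective).toEquiv).symm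

lemma sub_eq_of_le_card {H K : AddSubgroup M} [Finite M] (h : H ≤ K)
    (hc : Nat.card K ≤ Nat.card H) : H = K := by
  have h1 : (H : Set M) = (K : Set M) := by
    apply Set.eq_of_subset_of_ncard_le h ?_ (Set.toFinite _)
    rwa [← Nat.card_coe_set_eq, ← Nat.card_coe_set_eq]
  exact SetLike.coe_injective h1

lemma card_fiber_sum {S T : Type*} [Finite S] [Fintype T] (F : S → T) :
    Nat.card S = ∑ t : T, Nat.card {s // F s = t} := by
  classical
  rw [← Nat.card_congr (Equiv.sigmaFiberEquiv F)]
  letI : ∀ t, Fintype {s // F s = t} := fun t => Fintype.ofFinite _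
  rw [Nat.card_eq_fintype_card]
  simp [Fintype.card_sigma, Nat.card_eq_fintype_card]

lemma card_sup_of_inf_eq_bot {H K : AddSubgroup M} (h : H ⊓ K = ⊥) :
    Nat.card ↥(H ⊔ K) = Nat.card H * Nat.card K := by
  have hinj : Function.Injective (H.subtype.coprod K.subtype) := by
    rintro ⟨x, y⟩ ⟨x', y'⟩ hxy
    simp only [AddMonoidHom.coprod_apply, AddSubgroup.coe_subtype] at hxy
    have hd : (x : M) - x' = (y' : M) - y := by
      rw [sub_eq_sub_iff_add_eq_add, hxy, add_comm]
    have hmem : (x : M) - x' ∈ H ⊓ K := AddSubgroup.mem_inf.mpr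
      ⟨sub_mem x.2 x'.2, hd ▸ sub_mem y'.2 y.2⟩
    rw [h, AddSubgroup.mem_bot, sub_eq_zero] at hmem
    have hy : (y : M) = y' := by
      apply_fun (fun t => t - (x' : M)) at hxy
      rw [hmem] at hxy
      simpa [add_sub_cancel_left] using hxy
    exact Prod.ext (Subtype.ext hmem) (Subtype.ext hy)
  have hrange : (H.subtype.coprod K.subtype).range = H ⊔ K := by
    ext x
    simp only [AddMonoidHom.mem_range, AddMonoidHom.coprod_apply, AddSubgroup.coe_subtype]
    rw [AddSubgroup.mem_sup]
    constructor
    · rintro ⟨⟨a, b⟩, rfl⟩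
      exact ⟨a, a.2, b, b.2, rfl⟩
    · rintro ⟨a, ha, b, hb, rfl⟩
      exact ⟨(⟨a, ha⟩, ⟨b, hb⟩), rfl⟩
  calc Nat.card ↥(H ⊔ K) = Nat.card (↥H × ↥K) := by
        rw [← hrange]
        exact (Nat.card_congr (AddMonoidHom.ofInjective hinj).toEquiv).symm
    _ = Nat.card H * Nat.card K := Nat.card_prod _ _

end Generic

open Function AddSubgroup

section ZModHoms
variable {p : ℕ}

lemma natCast_val_zmod {n : ℕ} [NeZero n] (z : ZMod n) : ((z.val : ℕ) : ZMod n) = z :=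
  ZMod.natCast_rightInverse z

/-- Reduction mod `p` from `ZMod (p^k)`. -/
noncomputable def redh (p : ℕ) {k : ℕ} (hk : k ≠ 0) : ZMod (p^k) →+ ZMod p :=
  (ZMod.castHom (dvd_pow_self p hk) (ZMod p)).toAddMonoidHom

/-- Reduction between prime powers. -/
noncomputable def rrh (p : ℕ) {m n : ℕ} (h : m ≤ n) : ZMod (p^n) →+ ZMod (p^m) :=
  (ZMod.castHom (pow_dvd_pow p h) (ZMod (p^m))).toAddMonoidHom

lemma redh_natCast {k : ℕ} (hk : k ≠ 0) (n : ℕ) :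
    redh p hk ((n : ℕ) : ZMod (p^k)) = (n : ZMod p) := by
  simp [redh]

lemma rrh_natCast {m n : ℕ} (h : m ≤ n) (j : ℕ) :
    rrh p h ((j : ℕ) : ZMod (p^n)) = (j : ZMod (p^m)) := by
  simp [rrh]

lemma redh_surjective (hp : p.Prime) {k : ℕ} (hk : k ≠ 0) : Surjective (redh p hk) := by
  haveI : NeZero p := ⟨hp.ne_zero⟩
  intro y
  obtain ⟨n, rfl⟩ := ZMod.natCast_rightInverse.surjective y
  exact ⟨(n : ZMod (p^k)), redh_natCast hk n⟩

lemma redh_rrh (hp : p.Prime) {m n : ℕ} (hm : m ≠ 0) (h : m ≤ n) (x : ZMod (p^n)) :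
    redh p hm (rrh p h x) = redh p (show n ≠ 0 by omega) x := by
  haveI : NeZero (p^n) := ⟨pow_ne_zero n hp.ne_zero⟩
  obtain ⟨j, rfl⟩ : ∃ j : ℕ, (j : ZMod (p^n)) = x := ⟨x.val, natCast_val_zmod x⟩
  rw [rrh_natCast, redh_natCast, redh_natCast]

private lemma pow_pred_mul (hk : k ≠ 0) : p^(k-1) * p = p^k := by
  rw [← pow_succ]; congr 1; omega

/-- Multiplication by `p`, from `ZMod (p^(k-1))` to `ZMod (p^k)`. -/
noncomputable def pmul (p : ℕ) {k : ℕ} (hk : k ≠ 0) : ZMod (p^(k-1)) →+ ZMod (p^k) :=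
  ZMod.lift (p^(k-1)) ⟨zmultiplesHom (ZMod (p^k)) ((p : ℕ) : ZMod (p^k)), by
    simp only [zmultiplesHom_apply, natCast_zsmul, nsmul_eq_mul, ← Nat.cast_mul,
      pow_pred_mul hk, ZMod.natCast_self]⟩

lemma pmul_apply (hp : p.Prime) {k : ℕ} (hk : k ≠ 0) (u : ZMod (p^(k-1))) :
    pmul p hk u = ((u.val * p : ℕ) : ZMod (p^k)) := by
  haveI : NeZero (p^(k-1)) := ⟨pow_ne_zero _ hp.ne_zero⟩
  have hu : (((u.val : ℕ) : ℤ) : ZMod (p^(k-1))) = u := by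
    push_cast
    exact natCast_val_zmod u
  conv_lhs => rw [← hu]
  rw [pmul, ZMod.lift_coe]
  simp only [zmultiplesHom_apply, natCast_zsmul, nsmul_eq_mul, ← Nat.cast_mul]

lemma redh_pmul (hp : p.Prime) {k : ℕ} (hk : k ≠ 0) (u : ZMod (p^(k-1))) :
    redh p hk (pmul p hk u) = 0 := by
  rw [pmul_apply hp hk, redh_natCast]
  simp [ZMod.natCast_eq_zero_iff]

lemma pmul_injective (hp : p.Prime) {k : ℕ} (hk : k ≠ 0) : Injective (pmul p hk) := by
  haveI : NeZero (p^(k-1)) := ⟨pow_ne_zero _ hp.ne_zero⟩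
  intro u v huv
  rw [pmul_apply hp hk, pmul_apply hp hk, ZMod.natCast_eq_natCast_iff] at huv
  rw [← pow_pred_mul hk] at huv
  have h2 : u.val ≡ v.val [MOD p^(k-1)] := huv.mul_right_cancel' hp.ne_zero
  have h3 : u.val = v.val := by
    rw [Nat.ModEq] at h2
    rwa [Nat.mod_eq_of_lt (ZMod.val_lt u), Nat.mod_eq_of_lt (ZMod.val_lt v)] at h2
  calc u = ((u.val : ℕ) : ZMod (p^(k-1))) := (natCast_val_zmod u).symm
    _ = ((v.val : ℕ) : ZMod (p^(k-1))) := by rw [h3]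
    _ = v := natCast_val_zmod v

lemma exists_pmul (hp : p.Prime) {k : ℕ} (hk : k ≠ 0) (z : ZMod (p^k))
    (hz : redh p hk z = 0) : ∃ u, pmul p hk u = z := by
  haveI : NeZero (p^k) := ⟨pow_ne_zero _ hp.ne_zero⟩
  haveI : NeZero (p^(k-1)) := ⟨pow_ne_zero _ hp.ne_zero⟩
  obtain ⟨n, rfl⟩ : ∃ n : ℕ, (n : ZMod (p^k)) = z := ⟨z.val, natCast_val_zmod z⟩
  rw [redh_natCast, ZMod.natCast_eq_zero_iff] at hz
  obtain ⟨m, rfl⟩ := hz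
  refine ⟨(m : ZMod (p^(k-1))), ?_⟩
  rw [pmul_apply hp hk, ZMod.natCast_eq_natCast_iff, ← pow_pred_mul hk, mul_comm p m]
  have h1 : ((m : ZMod (p^(k-1))).val) ≡ m [MOD p^(k-1)] := by
    rw [ZMod.val_natCast]
    exact Nat.mod_modEq m (p^(k-1))
  exact h1.mul_right' p

end ZModHoms

open Function AddSubgroup

section Vside
variable (p : ℕ)

/-- The elementary abelian group of rank 3. -/
abbrev VV := ZMod p × ZMod p × ZMod p

variable {p}

lemma VV_tor (v : VV p) : p • v = 0 := by
  refine Prod.ext ?_ (Prod.ext ?_ ?_) <;>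
    simp [nsmul_eq_mul, ZMod.natCast_self]

lemma card_VV (hp : p.Prime) : Nat.card (VV p) = p^3 := by
  haveI : NeZero p := ⟨hp.ne_zero⟩
  simp [Nat.card_prod, ZMod.card, Nat.card_eq_fintype_card]
  ring

variable (p) in
/-- Lines: pivot 1. -/
def L1 (β γ : ZMod p) : AddSubgroup (VV p) where
  carrier := {v | v.2.1 = β * v.1 ∧ v.2.2 = γ * v.1}
  zero_mem' := by constructor <;> simp
  add_mem' := by
    rintro a b ⟨h1, h2⟩ ⟨h3, h4⟩
    constructor
    · show a.2.1 + b.2.1 = β * (a.1 + b.1); rw [h1, h3]; ring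
    · show a.2.2 + b.2.2 = γ * (a.1 + b.1); rw [h2, h4]; ring
  neg_mem' := by
    rintro a ⟨h1, h2⟩
    constructor
    · show -a.2.1 = β * -a.1; rw [h1]; ring
    · show -a.2.2 = γ * -a.1; rw [h2]; ring

variable (p) in
/-- Lines: pivot 2. -/
def L2 (γ : ZMod p) : AddSubgroup (VV p) where
  carrier := {v | v.1 = 0 ∧ v.2.2 = γ * v.2.1}
  zero_mem' := by constructor <;> simp
  add_mem' := by
    rintro a b ⟨h1, h2⟩ ⟨h3, h4⟩
    constructor
    · show a.1 + b.1 = 0; rw [h1, h3]; ring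
    · show a.2.2 + b.2.2 = γ * (a.2.1 + b.2.1); rw [h2, h4]; ring
  neg_mem' := by
    rintro a ⟨h1, h2⟩
    constructor
    · show -a.1 = 0; rw [h1]; ring
    · show -a.2.2 = γ * -a.2.1; rw [h2]; ring

variable (p) in
/-- Lines: pivot 3. -/
def L3 : AddSubgroup (VV p) where
  carrier := {v | v.1 = 0 ∧ v.2.1 = 0}
  zero_mem' := by constructor <;> simp
  add_mem' := by
    rintro a b ⟨h1, h2⟩ ⟨h3, h4⟩
    constructor
    · show a.1 + b.1 = 0; rw [h1, h3]; ring
    · show a.2.1 + b.2.1 = 0; rw [h2, h4]; ring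
  neg_mem' := by
    rintro a ⟨h1, h2⟩
    constructor
    · show -a.1 = 0; rw [h1]; ring
    · show -a.2.1 = 0; rw [h2]; ring

variable (p) in
/-- Planes: pivots 1,2. -/
def P12 (α β : ZMod p) : AddSubgroup (VV p) where
  carrier := {v | v.2.2 = α * v.1 + β * v.2.1}
  zero_mem' := by simp
  add_mem' := by
    rintro a b h1 h2
    show a.2.2 + b.2.2 = α * (a.1 + b.1) + β * (a.2.1 + b.2.1)
    rw [show a.2.2 = _ from h1, show b.2.2 = _ from h2]; ring
  neg_mem' := by
    rintro a h1
    show -a.2.2 = α * -a.1 + β * -a.2.1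
    rw [show a.2.2 = _ from h1]; ring

variable (p) in
/-- Planes: pivots 1,3. -/
def P13 (α : ZMod p) : AddSubgroup (VV p) where
  carrier := {v | v.2.1 = α * v.1}
  zero_mem' := by simp
  add_mem' := by
    rintro a b h1 h2
    show a.2.1 + b.2.1 = α * (a.1 + b.1)
    rw [show a.2.1 = _ from h1, show b.2.1 = _ from h2]; ring
  neg_mem' := by
    rintro a h1
    show -a.2.1 = α * -a.1
    rw [show a.2.1 = _ from h1]; ring

variable (p) in
/-- Planes: pivots 2,3. -/
def P23 : AddSubgroup (VV p) where
  carrier := {v | v.1 = 0}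
  zero_mem' := by simp
  add_mem' := by
    rintro a b h1 h2
    show a.1 + b.1 = 0
    rw [show a.1 = _ from h1, show b.1 = _ from h2]; ring
  neg_mem' := by
    rintro a h1
    show -a.1 = 0
    rw [show a.1 = _ from h1]; ring

lemma mem_L1 {β γ : ZMod p} {v : VV p} : v ∈ L1 p β γ ↔ v.2.1 = β * v.1 ∧ v.2.2 = γ * v.1 := Iff.rfl
lemma mem_L2 {γ : ZMod p} {v : VV p} : v ∈ L2 p γ ↔ v.1 = 0 ∧ v.2.2 = γ * v.2.1 := Iff.rfl
lemma mem_L3 {v : VV p} : v ∈ L3 p ↔ v.1 = 0 ∧ v.2.1 = 0 := Iff.rfl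
lemma mem_P12 {α β : ZMod p} {v : VV p} : v ∈ P12 p α β ↔ v.2.2 = α * v.1 + β * v.2.1 := Iff.rfl
lemma mem_P13 {α : ZMod p} {v : VV p} : v ∈ P13 p α ↔ v.2.1 = α * v.1 := Iff.rfl
lemma mem_P23 {v : VV p} : v ∈ P23 p ↔ v.1 = 0 := Iff.rfl

lemma card_L1 (hp : p.Prime) (β γ : ZMod p) : Nat.card (L1 p β γ) = p := by
  haveI : NeZero p := ⟨hp.ne_zero⟩
  have e : ↥(L1 p β γ) ≃ ZMod p :=
    { toFun := fun x => x.1.1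
      invFun := fun t => ⟨(t, β * t, γ * t), rfl, rfl⟩
      left_inv := by
        rintro ⟨⟨x, y, z⟩, hy, hz⟩
        apply Subtype.ext
        show ((x, β * x, γ * x) : VV p) = (x, y, z)
        rw [show y = β * x from hy, show z = γ * x from hz]
      right_inv := fun t => rfl }
  rw [Nat.card_congr e, Nat.card_eq_fintype_card, ZMod.card]

lemma card_L2 (hp : p.Prime) (γ : ZMod p) : Nat.card (L2 p γ) = p := by
  haveI : NeZero p := ⟨hp.ne_zero⟩
  have e : ↥(L2 p γ) ≃ ZMod p :=
    { toFun := fun x => x.1.2.1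
      invFun := fun t => ⟨(0, t, γ * t), rfl, rfl⟩
      left_inv := by
        rintro ⟨⟨x, y, z⟩, hx, hz⟩
        apply Subtype.ext
        show ((0, y, γ * y) : VV p) = (x, y, z)
        rw [show x = 0 from hx, show z = γ * y from hz]
      right_inv := fun t => rfl }
  rw [Nat.card_congr e, Nat.card_eq_fintype_card, ZMod.card]

lemma card_L3 (hp : p.Prime) : Nat.card (L3 p) = p := by
  haveI : NeZero p := ⟨hp.ne_zero⟩
  have e : ↥(L3 p) ≃ ZMod p :=
    { toFun := fun x => x.1.2.2
      invFun := fun t => ⟨(0, 0, t), rfl, rfl⟩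
      left_inv := by
        rintro ⟨⟨x, y, z⟩, hx, hy⟩
        apply Subtype.ext
        show ((0, 0, z) : VV p) = (x, y, z)
        rw [show x = 0 from hx, show y = 0 from hy]
      right_inv := fun t => rfl }
  rw [Nat.card_congr e, Nat.card_eq_fintype_card, ZMod.card]

lemma card_P12 (hp : p.Prime) (α β : ZMod p) : Nat.card (P12 p α β) = p^2 := by
  haveI : NeZero p := ⟨hp.ne_zero⟩
  have e : ↥(P12 p α β) ≃ ZMod p × ZMod p :=
    { toFun := fun x => (x.1.1, x.1.2.1)
      invFun := fun t => ⟨(t.1, t.2, α * t.1 + β * t.2), rfl⟩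
      left_inv := by
        rintro ⟨⟨x, y, z⟩, hz⟩
        apply Subtype.ext
        show ((x, y, α * x + β * y) : VV p) = (x, y, z)
        rw [show z = _ from hz]
      right_inv := fun t => rfl }
  rw [Nat.card_congr e, Nat.card_eq_fintype_card, Fintype.card_prod, ZMod.card]
  ring

lemma card_P13 (hp : p.Prime) (α : ZMod p) : Nat.card (P13 p α) = p^2 := by
  haveI : NeZero p := ⟨hp.ne_zero⟩
  have e : ↥(P13 p α) ≃ ZMod p × ZMod p :=
    { toFun := fun x => (x.1.1, x.1.2.2)
      invFun := fun t => ⟨(t.1, α * t.1, t.2), rfl⟩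
      left_inv := by
        rintro ⟨⟨x, y, z⟩, hy⟩
        apply Subtype.ext
        show ((x, α * x, z) : VV p) = (x, y, z)
        rw [show y = _ from hy]
      right_inv := fun t => rfl }
  rw [Nat.card_congr e, Nat.card_eq_fintype_card, Fintype.card_prod, ZMod.card]
  ring

lemma card_P23 (hp : p.Prime) : Nat.card (P23 p) = p^2 := by
  haveI : NeZero p := ⟨hp.ne_zero⟩
  have e : ↥(P23 p) ≃ ZMod p × ZMod p :=
    { toFun := fun x => (x.1.2.1, x.1.2.2)
      invFun := fun t => ⟨(0, t.1, t.2), rfl⟩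
      left_inv := by
        rintro ⟨⟨x, y, z⟩, hx⟩
        apply Subtype.ext
        show ((0, y, z) : VV p) = (x, y, z)
        rw [show x = (0 : ZMod p) from hx]
      right_inv := fun t => rfl }
  rw [Nat.card_congr e, Nat.card_eq_fintype_card, Fintype.card_prod, ZMod.card]
  ring

variable (p) in
/-- Parameter space for lines (and planes). -/
abbrev PAR := (ZMod p × ZMod p) ⊕ (ZMod p) ⊕ Unit

variable (p) in
def lineMap : PAR p → AddSubgroup (VV p)
  | Sum.inl t => L1 p t.1 t.2
  | Sum.inr (Sum.inl γ) => L2 p γ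
  | Sum.inr (Sum.inr _) => L3 p

variable (p) in
def planeMap : PAR p → AddSubgroup (VV p)
  | Sum.inl t => P12 p t.1 t.2
  | Sum.inr (Sum.inl α) => P13 p α
  | Sum.inr (Sum.inr _) => P23 p

lemma card_lineMap (hp : p.Prime) (t : PAR p) : Nat.card (lineMap p t) = p := by
  rcases t with t | γ | u
  exacts [card_L1 hp t.1 t.2, card_L2 hp γ, card_L3 hp]

lemma card_planeMap (hp : p.Prime) (t : PAR p) : Nat.card (planeMap p t) = p^2 := by
  rcases t with t | α | u
  exacts [card_P12 hp t.1 t.2, card_P13 hp α, card_P23 hp]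

lemma lineMap_injective (hp : p.Prime) : Injective (lineMap p) := by
  haveI : Fact p.Prime := ⟨hp⟩
  intro s t hst
  rcases s with s | γ | u <;> rcases t with t | γ' | u' <;>
    simp only [lineMap] at hst
  · have h1 : ((1 : ZMod p), s.1, s.2) ∈ L1 p s.1 s.2 := ⟨(mul_one _).symm, (mul_one _).symm⟩
    rw [hst, mem_L1] at h1
    obtain ⟨h2, h3⟩ := h1
    simp only [mul_one] at h2 h3
    rw [show s = (s.1, s.2) from rfl, h2, h3]
  · have h1 : ((1 : ZMod p), s.1, s.2) ∈ L1 p s.1 s.2 := ⟨(mul_one _).symm, (mul_one _).symm⟩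
    rw [hst, mem_L2] at h1
    exact absurd h1.1 one_ne_zero
  · have h1 : ((1 : ZMod p), s.1, s.2) ∈ L1 p s.1 s.2 := ⟨(mul_one _).symm, (mul_one _).symm⟩
    rw [hst, mem_L3] at h1
    exact absurd h1.1 one_ne_zero
  · have h1 : ((1 : ZMod p), t.1, t.2) ∈ L1 p t.1 t.2 := ⟨(mul_one _).symm, (mul_one _).symm⟩
    rw [← hst, mem_L2] at h1
    exact absurd h1.1 one_ne_zero
  · have h1 : ((0 : ZMod p), (1 : ZMod p), γ) ∈ L2 p γ := ⟨rfl, (mul_one _).symm⟩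
    rw [hst, mem_L2] at h1
    obtain ⟨-, h3⟩ := h1
    simp only [mul_one] at h3
    rw [h3]
  · have h1 : ((0 : ZMod p), (1 : ZMod p), γ) ∈ L2 p γ := ⟨rfl, (mul_one _).symm⟩
    rw [hst, mem_L3] at h1
    exact absurd h1.2 one_ne_zero
  · have h1 : ((1 : ZMod p), t.1, t.2) ∈ L1 p t.1 t.2 := ⟨(mul_one _).symm, (mul_one _).symm⟩
    rw [← hst, mem_L3] at h1
    exact absurd h1.1 one_ne_zero
  · have h1 : ((0 : ZMod p), (1 : ZMod p), γ') ∈ L2 p γ' := ⟨rfl, (mul_one _).symm⟩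
    rw [← hst, mem_L3] at h1
    exact absurd h1.2 one_ne_zero
  · rfl

lemma planeMap_injective (hp : p.Prime) : Injective (planeMap p) := by
  haveI : Fact p.Prime := ⟨hp⟩
  intro s t hst
  rcases s with s | α | u <;> rcases t with t | α' | u' <;>
    simp only [planeMap] at hst
  · have h1 : ((1 : ZMod p), (0 : ZMod p), s.1) ∈ P12 p s.1 s.2 := by rw [mem_P12]; ring
    have h2 : ((0 : ZMod p), (1 : ZMod p), s.2) ∈ P12 p s.1 s.2 := by rw [mem_P12]; ring
    rw [hst, mem_P12] at h1 h2
    simp only [mul_one, mul_zero, add_zero, zero_add] at h1 h2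
    rw [show s = (s.1, s.2) from rfl, h1, h2]
  · have h1 : ((0 : ZMod p), (1 : ZMod p), s.2) ∈ P12 p s.1 s.2 := by rw [mem_P12]; ring
    rw [hst, mem_P13] at h1
    simp only [mul_zero] at h1
    exact absurd h1 one_ne_zero
  · have h1 : ((1 : ZMod p), (0 : ZMod p), s.1) ∈ P12 p s.1 s.2 := by rw [mem_P12]; ring
    rw [hst, mem_P23] at h1
    exact absurd h1 one_ne_zero
  · have h1 : ((0 : ZMod p), (1 : ZMod p), t.2) ∈ P12 p t.1 t.2 := by rw [mem_P12]; ring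
    rw [← hst, mem_P13] at h1
    simp only [mul_zero] at h1
    exact absurd h1 one_ne_zero
  · have h1 : ((1 : ZMod p), α, (0 : ZMod p)) ∈ P13 p α := by rw [mem_P13]; ring
    rw [hst, mem_P13] at h1
    simp only [mul_one] at h1
    rw [h1]
  · have h1 : ((1 : ZMod p), α, (0 : ZMod p)) ∈ P13 p α := by rw [mem_P13]; ring
    rw [hst, mem_P23] at h1
    exact absurd h1 one_ne_zero
  · have h1 : ((1 : ZMod p), (0 : ZMod p), t.1) ∈ P12 p t.1 t.2 := by rw [mem_P12]; ring
    rw [← hst, mem_P23] at h1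
    exact absurd h1 one_ne_zero
  · have h1 : ((1 : ZMod p), α', (0 : ZMod p)) ∈ P13 p α' := by rw [mem_P13]; ring
    rw [← hst, mem_P23] at h1
    exact absurd h1 one_ne_zero
  · rfl

end Vside
section Counting
open Function AddSubgroup
variable {p : ℕ}

lemma nat_card_compl {S : Type*} [Finite S] (P : S → Prop) :
    Nat.card {s // ¬ P s} = Nat.card S - Nat.card {s // P s} := by
  classical
  letI := Fintype.ofFinite S
  letI : Fintype {s // P s} := Fintype.ofFinite _
  letI : Fintype {s // ¬ P s} := Fintype.ofFinite _
  rw [Nat.card_eq_fintype_card, Nat.card_eq_fintype_card, Nat.card_eq_fintype_card,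
    Fintype.card_subtype_compl]

lemma card_ne_zero_sub {S : Type*} [Finite S] [AddCommGroup S] :
    Nat.card {s : S // s ≠ 0} = Nat.card S - 1 := by
  classical
  have h := nat_card_compl (S := S) (fun s => s = 0)
  letI := Fintype.ofFinite S
  letI : Fintype {s : S // s = 0} := Fintype.ofFinite _
  have : Nat.card {s : S // s = 0} = 1 := by
    rw [Nat.card_eq_fintype_card, Fintype.card_subtype_eq]
  rw [this] at h
  exact h

/-- Number of subgroups of prime order in a `p`-torsion group. -/
lemma cardAtoms (hp : p.Prime) {W : Type*} [AddCommGroup W] [Finite W]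
    (tor : ∀ x : W, p • x = 0) :
    Nat.card {Z : AddSubgroup W // Nat.card Z = p} * (p - 1) = Nat.card W - 1 := by
  classical
  haveI : Fact p.Prime := ⟨hp⟩
  have hcz : ∀ x : W, x ≠ 0 → Nat.card (zmultiples x) = p := fun x hx => by
    rw [Nat.card_zmultiples, addOrderOf_eq_prime (tor x) hx]
  set F : {x : W // x ≠ 0} → {Z : AddSubgroup W // Nat.card Z = p} :=
    fun x => ⟨zmultiples x.1, hcz x.1 x.2⟩ with hF
  letI : Fintype {Z : AddSubgroup W // Nat.card Z = p} := Fintype.ofFinite _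
  have h1 := card_fiber_sum F
  have h2 : ∀ Z : {Z : AddSubgroup W // Nat.card Z = p},
      Nat.card {x // F x = Z} = p - 1 := by
    intro Z
    have e : {x // F x = Z} ≃ {z : ↥Z.1 // z ≠ 0} :=
      { toFun := fun x => ⟨⟨x.1.1, by
          have h3 : zmultiples x.1.1 = Z.1 := congrArg Subtype.val x.2
          rw [← h3]; exact mem_zmultiples _⟩,
          fun h0 => x.1.2 (congrArg Subtype.val h0)⟩
        invFun := fun z => ⟨⟨z.1.1, fun h0 => z.2 (Subtype.ext h0)⟩, by
          apply Subtype.ext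
          show zmultiples z.1.1 = Z.1
          apply sub_eq_of_le_card (zmultiples_le.mpr z.1.2)
          rw [hcz _ (fun h0 => z.2 (Subtype.ext h0)), Z.2]⟩
        left_inv := fun x => Subtype.ext (Subtype.ext rfl)
        right_inv := fun z => Subtype.ext (Subtype.ext rfl) }
    rw [Nat.card_congr e, card_ne_zero_sub, Z.2]
  rw [card_ne_zero_sub] at h1
  rw [Finset.sum_congr rfl (fun Z _ => h2 Z), Finset.sum_const, smul_eq_mul,
    Finset.card_univ, ← Nat.card_eq_fintype_card] at h1
  exact h1.symm

lemma card_over (hp : p.Prime) {W : Type*} [AddCommGroup W] [Finite W]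
    (tor : ∀ x : W, p • x = 0) (hW : Nat.card W = p^3)
    (Z : AddSubgroup W) (hZ : Nat.card Z = p) :
    Nat.card {Y : AddSubgroup W // Z ≤ Y ∧ Nat.card Y = p^2} = p + 1 := by
  classical
  haveI : Fact p.Prime := ⟨hp⟩
  have hsup : ∀ y : W, y ∉ Z → Nat.card ↥(Z ⊔ zmultiples y) = p^2 := by
    intro y hy
    have hyne : y ≠ 0 := fun h => hy (h ▸ Z.zero_mem)
    have hzy : Nat.card (zmultiples y) = p := by
      rw [Nat.card_zmultiples, addOrderOf_eq_prime (tor y) hyne]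
    have hinf : Z ⊓ zmultiples y = ⊥ := by
      by_contra hne
      have hdvd : Nat.card ↥(Z ⊓ zmultiples y) ∣ p :=
        hzy ▸ card_dvd_of_le inf_le_right
      rcases (Nat.dvd_prime hp).mp hdvd with h | h
      · exact hne (card_eq_one.mp h)
      · have heq : Z ⊓ zmultiples y = zmultiples y :=
          sub_eq_of_le_card inf_le_right (by rw [hzy, h])
        have hle : zmultiples y ≤ Z := heq ▸ inf_le_left
        exact hy (hle (mem_zmultiples y))
    rw [card_sup_of_inf_eq_bot hinf, hZ, hzy]
    ring
  letI : Fintype {Y : AddSubgroup W // Z ≤ Y ∧ Nat.card Y = p^2} := Fintype.ofFinite _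
  set F : {y : W // y ∉ Z} → {Y : AddSubgroup W // Z ≤ Y ∧ Nat.card Y = p^2} := fun y =>
    ⟨Z ⊔ zmultiples y.1, le_sup_left, hsup y.1 y.2⟩ with hF
  have h1 := card_fiber_sum F
  have h2 : ∀ Y : {Y : AddSubgroup W // Z ≤ Y ∧ Nat.card Y = p^2},
      Nat.card {y // F y = Y} = p^2 - p := by
    intro Y
    have e : {y // F y = Y} ≃ {z : ↥Y.1 // ¬ (z.1 ∈ Z)} :=
      { toFun := fun y => ⟨⟨y.1.1, by
          have h3 : Z ⊔ zmultiples y.1.1 = Y.1 := congrArg Subtype.val y.2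
          rw [← h3]
          exact SetLike.le_def.mp le_sup_right (mem_zmultiples _)⟩, y.1.2⟩
        invFun := fun z => ⟨⟨z.1.1, z.2⟩, by
          apply Subtype.ext
          show Z ⊔ zmultiples z.1.1 = Y.1
          apply sub_eq_of_le_card (sup_le Y.2.1 (zmultiples_le.mpr z.1.2))
          rw [hsup z.1.1 z.2, Y.2.2]⟩
        left_inv := fun y => Subtype.ext (Subtype.ext rfl)
        right_inv := fun z => Subtype.ext (Subtype.ext rfl) }
    rw [Nat.card_congr e, nat_card_compl]
    have h5 : Nat.card {z : ↥Y.1 // z.1 ∈ Z} = p := by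
      refine Eq.trans (Nat.card_congr
        { toFun := fun z => (⟨z.1.1, z.2⟩ : ↥Z)
          invFun := fun z => ⟨⟨z.1, Y.2.1 z.2⟩, z.2⟩
          left_inv := fun z => Subtype.ext (Subtype.ext rfl)
          right_inv := fun z => Subtype.ext rfl }) hZ
    rw [h5, Y.2.2]
  have h6 : Nat.card {y : W // ¬ (y ∈ Z)} = p^3 - p := by
    rw [nat_card_compl (fun y : W => y ∈ Z), hW]
    have h9 : Nat.card {y : W // y ∈ Z} = p := by
      refine Eq.trans (Nat.card_congr
        { toFun := fun z => (⟨z.1, z.2⟩ : ↥Z)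
          invFun := fun z => ⟨z.1, z.2⟩
          left_inv := fun z => rfl
          right_inv := fun z => rfl }) hZ
    rw [h9]
  rw [h6, Finset.sum_congr rfl (fun Y _ => h2 Y), Finset.sum_const, smul_eq_mul,
    Finset.card_univ, ← Nat.card_eq_fintype_card] at h1
  have h7 : (p + 1) * (p^2 - p) = p^3 - p := by
    have e1 : p ≤ p^2 := by nlinarith [hp.two_le]
    have e2 : p ≤ p^3 := by nlinarith [hp.two_le]
    zify [e1, e2]
    ring
  have h8 : 0 < p^2 - p := by
    have h9 : p < p^2 := by nlinarith [hp.two_le]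
    omega
  exact Nat.eq_of_mul_eq_mul_right h8 (h1.symm.trans h7.symm)

lemma line_complete (hp : p.Prime) (Z : AddSubgroup (VV p)) (hZ : Nat.card Z = p) :
    ∃ t : PAR p, lineMap p t = Z := by
  haveI : Fact p.Prime := ⟨hp⟩
  have hnt : Nontrivial ↥Z := by
    refine Finite.one_lt_card_iff_nontrivial.mp ?_
    rw [hZ]
    exact hp.one_lt
  obtain ⟨v, hv⟩ := exists_ne (0 : ↥Z)
  set w : VV p := v.1 with hw
  have hvne : w ≠ 0 := fun h => hv (Subtype.ext h)
  have hcz : Nat.card (zmultiples w) = p := by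
    rw [Nat.card_zmultiples, addOrderOf_eq_prime (VV_tor _) hvne]
  have hZeq : zmultiples w = Z :=
    sub_eq_of_le_card (zmultiples_le.mpr v.2) (by rw [hcz, hZ])
  have key : ∀ t : PAR p, w ∈ lineMap p t → lineMap p t = Z := by
    intro t ht
    rw [← hZeq]
    exact (sub_eq_of_le_card (zmultiples_le.mpr ht)
      (by rw [hcz, card_lineMap hp])).symm
  by_cases hx : w.1 = 0
  · by_cases hy : w.2.1 = 0
    · refine ⟨Sum.inr (Sum.inr ()), key _ ?_⟩
      exact ⟨hx, hy⟩
    · refine ⟨Sum.inr (Sum.inl (w.2.2 * w.2.1⁻¹)), key _ ?_⟩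
      refine ⟨hx, ?_⟩
      rw [mul_assoc, inv_mul_cancel₀ hy, mul_one]
  · refine ⟨Sum.inl (w.2.1 * w.1⁻¹, w.2.2 * w.1⁻¹), key _ ?_⟩
    constructor
    · rw [mul_assoc, inv_mul_cancel₀ hx, mul_one]
    · rw [mul_assoc, inv_mul_cancel₀ hx, mul_one]

lemma line_bij (hp : p.Prime) :
    Bijective (fun t : PAR p =>
      (⟨lineMap p t, card_lineMap hp t⟩ : {Z : AddSubgroup (VV p) // Nat.card Z = p})) := by
  constructor
  · intro s t hst
    exact lineMap_injective hp (congrArg Subtype.val hst)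
  · rintro ⟨Z, hZ⟩
    obtain ⟨t, ht⟩ := line_complete hp Z hZ
    exact ⟨t, Subtype.ext ht⟩

lemma card_PAR (hp : p.Prime) : Nat.card (PAR p) = p^2 + p + 1 := by
  haveI : NeZero p := ⟨hp.ne_zero⟩
  rw [Nat.card_eq_fintype_card]
  rw [Fintype.card_sum, Fintype.card_sum, Fintype.card_prod, ZMod.card, Fintype.card_unit]
  ring

lemma card_lines (hp : p.Prime) :
    Nat.card {Z : AddSubgroup (VV p) // Nat.card Z = p} = p^2 + p + 1 := by
  rw [← Nat.card_congr (Equiv.ofBijective _ (line_bij hp))]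
  exact card_PAR hp

lemma card_subs_le_card {W : Type*} [AddCommGroup W] [Finite W] (H : AddSubgroup W) (n : ℕ) :
    Nat.card {Z : AddSubgroup W // Z ≤ H ∧ Nat.card Z = n} =
      Nat.card {B : AddSubgroup ↥H // Nat.card B = n} := by
  apply Nat.card_congr
  refine
    { toFun := fun Z => ⟨Z.1.addSubgroupOf H, ?_⟩
      invFun := fun B => ⟨B.1.map H.subtype, fun x hx => by
        obtain ⟨y, -, rfl⟩ := hx
        exact y.2, by rw [card_map_subtype, B.2]⟩
      left_inv := fun Z => Subtype.ext (by
        show map H.subtype ((Z.1).addSubgroupOf H) = Z.1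
        rw [addSubgroupOf_map_subtype]
        exact inf_of_le_left Z.2.1)
      right_inv := fun B => Subtype.ext (comap_map_eq_self_of_injective H.subtype_injective B.1) }
  · have hmap : (Z.1.addSubgroupOf H).map H.subtype = Z.1 := by
      rw [addSubgroupOf_map_subtype]
      exact inf_of_le_left Z.2.1
    have hc := card_map_subtype H (Z.1.addSubgroupOf H)
    rw [hmap] at hc
    exact hc.symm.trans Z.2.2

lemma tor_sub {W : AddSubgroup (VV p)} (z : ↥W) : p • z = 0 := by
  apply Subtype.ext
  simpa using VV_tor (z : VV p)

lemma card_planes (hp : p.Prime) :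
    Nat.card {Y : AddSubgroup (VV p) // Nat.card Y = p^2} = p^2 + p + 1 := by
  classical
  haveI : Fact p.Prime := ⟨hp⟩
  set LS := {Z : AddSubgroup (VV p) // Nat.card Z = p} with hLS
  set PS := {Y : AddSubgroup (VV p) // Nat.card Y = p^2} with hPS
  letI : Fintype LS := Fintype.ofFinite _
  letI : Fintype PS := Fintype.ofFinite _
  have h1 := card_fiber_sum (fun x : {x : LS × PS // x.1.1 ≤ x.2.1} => x.1.2)
  have h2 := card_fiber_sum (fun x : {x : LS × PS // x.1.1 ≤ x.2.1} => x.1.1)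
  have hfib2 : ∀ Y : PS,
      Nat.card {x : {x : LS × PS // x.1.1 ≤ x.2.1} // x.1.2 = Y} = p + 1 := by
    intro Y
    have e : {x : {x : LS × PS // x.1.1 ≤ x.2.1} // x.1.2 = Y} ≃
        {Z : AddSubgroup (VV p) // Z ≤ Y.1 ∧ Nat.card Z = p} :=
      { toFun := fun x => ⟨x.1.1.1.1, by
          have h3 : x.1.1.2.1 = Y.1 := congrArg Subtype.val x.2
          rw [← h3]
          exact x.1.2, x.1.1.1.2⟩
        invFun := fun Z => ⟨⟨(⟨Z.1, Z.2.2⟩, Y), Z.2.1⟩, rfl⟩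
        left_inv := by
          rintro ⟨⟨⟨Z1, Y1⟩, hle⟩, hfib⟩
          have : Y1 = Y := hfib
          subst this
          rfl
        right_inv := fun Z => rfl }
    rw [Nat.card_congr e, card_subs_le_card]
    have tor' : ∀ z : ↥Y.1, p • z = 0 := fun z => tor_sub z
    have hcA := cardAtoms hp tor'
    have hcY : Nat.card ↥Y.1 = p^2 := Y.2
    rw [hcY] at hcA
    have h7 : (p + 1) * (p - 1) = p^2 - 1 := by
      have e1 : 1 ≤ p := hp.one_lt.le
      have e2 : 1 ≤ p^2 := Nat.one_le_of_lt (a := p) (by nlinarith [hp.two_le])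
      zify [e1, e2]
      ring
    have h8 : 0 < p - 1 := by have := hp.one_lt; omega
    exact Nat.eq_of_mul_eq_mul_right h8 (hcA.trans h7.symm)
  have hfib1 : ∀ Z : LS,
      Nat.card {x : {x : LS × PS // x.1.1 ≤ x.2.1} // x.1.1 = Z} = p + 1 := by
    intro Z
    have e : {x : {x : LS × PS // x.1.1 ≤ x.2.1} // x.1.1 = Z} ≃
        {Y : AddSubgroup (VV p) // Z.1 ≤ Y ∧ Nat.card Y = p^2} :=
      { toFun := fun x => ⟨x.1.1.2.1, by
          have h3 : x.1.1.1 = Z := x.2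
          have h4 : x.1.1.1.1 = Z.1 := congrArg Subtype.val h3
          rw [← h4]
          exact x.1.2, x.1.1.2.2⟩
        invFun := fun Y => ⟨⟨(Z, ⟨Y.1, Y.2.2⟩), Y.2.1⟩, rfl⟩
        left_inv := by
          rintro ⟨⟨⟨Z1, Y1⟩, hle⟩, hfib⟩
          have : Z1 = Z := hfib
          subst this
          rfl
        right_inv := fun Y => rfl }
    rw [Nat.card_congr e]
    exact card_over hp VV_tor (card_VV hp) Z.1 Z.2
  rw [Finset.sum_congr rfl (fun Y _ => hfib2 Y), Finset.sum_const, smul_eq_mul,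
    Finset.card_univ, ← Nat.card_eq_fintype_card] at h1
  rw [Finset.sum_congr rfl (fun Z _ => hfib1 Z), Finset.sum_const, smul_eq_mul,
    Finset.card_univ, ← Nat.card_eq_fintype_card, card_lines hp] at h2
  have := h1.symm.trans h2
  exact Nat.eq_of_mul_eq_mul_right (by omega : 0 < p + 1) this

end Counting
section Mobius
open Function AddSubgroup
variable {p : ℕ}

lemma card_top_VV (hp : p.Prime) : Nat.card (⊤ : AddSubgroup (VV p)) = p^3 := by
  haveI : NeZero p := ⟨hp.ne_zero⟩
  exact (Nat.card_congr AddSubgroup.topEquiv.toEquiv).trans (card_VV hp)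

lemma card_cases (hp : p.Prime) (Y : AddSubgroup (VV p)) :
    Nat.card Y = 1 ∨ Nat.card Y = p ∨ Nat.card Y = p^2 ∨ Nat.card Y = p^3 := by
  haveI : NeZero p := ⟨hp.ne_zero⟩
  have hdvd : Nat.card Y ∣ p^3 := by
    have h1 := card_dvd_of_le (le_top (a := Y))
    rwa [card_top_VV hp] at h1
  obtain ⟨i, hi, h⟩ := (Nat.dvd_prime_pow hp).mp hdvd
  have : i = 0 ∨ i = 1 ∨ i = 2 ∨ i = 3 := by omega
  rcases this with rfl | rfl | rfl | rfl
  · left; simpa using h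
  · right; left; simpa using h
  · right; right; left; exact h
  · right; right; right; exact h

lemma top_of_card (hp : p.Prime) {Y : AddSubgroup (VV p)} (h : Nat.card Y = p^3) : Y = ⊤ := by
  haveI : NeZero p := ⟨hp.ne_zero⟩
  exact sub_eq_of_le_card le_top (by rw [h, card_top_VV hp])

lemma plane_bij (hp : p.Prime) :
    Bijective (fun t : PAR p =>
      (⟨planeMap p t, card_planeMap hp t⟩ :
        {Y : AddSubgroup (VV p) // Nat.card Y = p^2})) := by
  classical
  haveI : NeZero p := ⟨hp.ne_zero⟩
  letI : Fintype {Y : AddSubgroup (VV p) // Nat.card Y = p^2} := Fintype.ofFinite _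
  rw [Fintype.bijective_iff_injective_and_card]
  constructor
  · intro s t hst
    exact planeMap_injective hp (congrArg Subtype.val hst)
  · rw [← Nat.card_eq_fintype_card, ← Nat.card_eq_fintype_card, card_PAR hp, card_planes hp]

lemma plane_complete (hp : p.Prime) (Y : AddSubgroup (VV p)) (hY : Nat.card Y = p^2) :
    ∃ t : PAR p, planeMap p t = Y := by
  obtain ⟨t, ht⟩ := (plane_bij hp).2 ⟨Y, hY⟩
  exact ⟨t, congrArg Subtype.val ht⟩

lemma card_allMap_ne (hp : p.Prime) : (1:ℕ) < p ∧ p < p^2 ∧ p^2 < p^3 := by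
  have h2 := hp.two_le
  refine ⟨hp.one_lt, ?_, ?_⟩ <;> nlinarith

variable (p) in
noncomputable def allMap : (Unit ⊕ Unit) ⊕ (PAR p ⊕ PAR p) → AddSubgroup (VV p)
  | Sum.inl (Sum.inl _) => ⊥
  | Sum.inl (Sum.inr _) => ⊤
  | Sum.inr (Sum.inl t) => lineMap p t
  | Sum.inr (Sum.inr t) => planeMap p t

lemma allMap_bijective (hp : p.Prime) : Bijective (allMap p) := by
  haveI : NeZero p := ⟨hp.ne_zero⟩
  have h2 := hp.two_le
  have c1 : 1 < p := hp.one_lt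
  have c2 : p < p^2 := by nlinarith
  have c3 : p^2 < p^3 := by nlinarith
  have cb : Nat.card (⊥ : AddSubgroup (VV p)) = 1 := by rw [card_eq_one]
  constructor
  · intro s t hst
    rcases s with (s | s) | (s | s) <;> rcases t with (t | t) | (t | t) <;>
      simp only [allMap] at hst <;>
      first
      | (cases s; cases t; rfl)
      | (exact congrArg (Sum.inr ∘ Sum.inl) (lineMap_injective hp hst))
      | (exact congrArg (Sum.inr ∘ Sum.inr) (planeMap_injective hp hst))
      | (exfalso
         have hc := congrArg (fun (A : AddSubgroup (VV p)) => Nat.card A) hst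
         first
         | rw [cb] at hc
         | rw [card_top_VV hp] at hc
         | rw [card_lineMap hp] at hc
         | rw [card_planeMap hp] at hc
         first
         | rw [cb] at hc
         | rw [card_top_VV hp] at hc
         | rw [card_lineMap hp] at hc
         | rw [card_planeMap hp] at hc
         set q2 := p^2
         set q3 := p^3
         omega)
  · intro Y
    rcases card_cases hp Y with h | h | h | h
    · exact ⟨Sum.inl (Sum.inl ()), (card_eq_one.mp h).symm⟩
    · obtain ⟨t, ht⟩ := line_complete hp Y h
      exact ⟨Sum.inr (Sum.inl t), ht⟩
    · obtain ⟨t, ht⟩ := plane_complete hp Y h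
      exact ⟨Sum.inr (Sum.inr t), ht⟩
    · exact ⟨Sum.inl (Sum.inr ()), (top_of_card hp h).symm⟩

end Mobius
section MobiusId
open Function AddSubgroup
open scoped Classical
variable {p : ℕ}

variable (p) in
noncomputable def mub (Y : AddSubgroup (VV p)) : ℤ :=
  if Nat.card Y = p^3 then 1 else if Nat.card Y = p^2 then -1
  else if Nat.card Y = p then (p : ℤ) else -(p:ℤ)^3

lemma mub_top (hp : p.Prime) : mub p (⊤ : AddSubgroup (VV p)) = 1 := by
  rw [mub, if_pos (card_top_VV hp)]

lemma mub_plane (hp : p.Prime) (t : PAR p) : mub p (planeMap p t) = -1 := by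
  obtain ⟨c1, c2, c3⟩ := card_allMap_ne hp
  rw [mub, if_neg (by rw [card_planeMap hp]; exact Nat.ne_of_lt c3),
    if_pos (card_planeMap hp t)]

lemma mub_line (hp : p.Prime) (t : PAR p) : mub p (lineMap p t) = (p : ℤ) := by
  obtain ⟨c1, c2, c3⟩ := card_allMap_ne hp
  rw [mub, if_neg (by rw [card_lineMap hp]; exact Nat.ne_of_lt (c2.trans c3)),
    if_neg (by rw [card_lineMap hp]; exact Nat.ne_of_lt c2),
    if_pos (card_lineMap hp t)]

lemma mub_bot (hp : p.Prime) : mub p (⊥ : AddSubgroup (VV p)) = -(p:ℤ)^3 := by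
  obtain ⟨c1, c2, c3⟩ := card_allMap_ne hp
  have cb : Nat.card (⊥ : AddSubgroup (VV p)) = 1 := by rw [card_eq_one]
  rw [mub, if_neg (by rw [cb]; exact Nat.ne_of_lt (c1.trans (c2.trans c3))),
    if_neg (by rw [cb]; exact Nat.ne_of_lt (c1.trans c2)),
    if_neg (by rw [cb]; exact Nat.ne_of_lt c1)]

lemma sum_decomp (hp : p.Prime) [Fintype (AddSubgroup (VV p))] [Fintype (PAR p)]
    (F : AddSubgroup (VV p) → ℤ) :
    (∑ Y : AddSubgroup (VV p), F Y) =
      F ⊥ + F ⊤ + (∑ t : PAR p, F (lineMap p t)) + (∑ t : PAR p, F (planeMap p t)) := by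
  classical
  rw [← Equiv.sum_comp (Equiv.ofBijective _ (allMap_bijective hp)) F]
  simp only [Equiv.ofBijective_apply, Fintype.sum_sum_type, Fintype.sum_unique]
  simp only [allMap]
  ring

lemma sum_ite_count {T : Type*} [Fintype T] (P : T → Prop) [DecidablePred P] (c : ℤ) :
    (∑ t : T, if P t then c else 0) = (Nat.card {t // P t}) * c := by
  classical
  rw [Finset.sum_ite, Finset.sum_const, Finset.sum_const_zero, add_zero,
    Nat.card_eq_fintype_card, Fintype.card_subtype]
  rw [nsmul_eq_mul]

lemma count_planes_over_line (hp : p.Prime) [Fintype (PAR p)]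
    (Z : AddSubgroup (VV p)) (hZ : Nat.card Z = p) :
    Nat.card {t : PAR p // Z ≤ planeMap p t} = p + 1 := by
  classical
  haveI : NeZero p := ⟨hp.ne_zero⟩
  have e : {t : PAR p // Z ≤ planeMap p t} ≃
      {Y : AddSubgroup (VV p) // Z ≤ Y ∧ Nat.card Y = p^2} :=
    { toFun := fun t => ⟨planeMap p t.1, t.2, card_planeMap hp t.1⟩
      invFun := fun Y => ⟨Classical.choose (plane_complete hp Y.1 Y.2.2), by
          have hs := Classical.choose_spec (plane_complete hp Y.1 Y.2.2)
          rw [hs]; exact Y.2.1⟩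
      left_inv := fun t => Subtype.ext
        (planeMap_injective hp (Classical.choose_spec
          (plane_complete hp (planeMap p t.1) (card_planeMap hp t.1))))
      right_inv := fun Y => Subtype.ext (Classical.choose_spec (plane_complete hp Y.1 Y.2.2)) }
  rw [Nat.card_congr e]
  exact card_over hp VV_tor (card_VV hp) Z hZ

lemma mobius_id (hp : p.Prime) [Fintype (AddSubgroup (VV p))] [Fintype (PAR p)]
    (Z : AddSubgroup (VV p)) :
    (∑ Y : AddSubgroup (VV p), mub p Y * (if Z ≤ Y then 1 else 0)) =
      (if Z = ⊤ then (1:ℤ) else 0) := by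
  haveI : NeZero p := ⟨hp.ne_zero⟩
  obtain ⟨c1, c2, c3⟩ := card_allMap_ne hp
  have cb : Nat.card (⊥ : AddSubgroup (VV p)) = 1 := by rw [card_eq_one]
  have hcarP : (Fintype.card (PAR p) : ℤ) = (p:ℤ)^2 + p + 1 := by
    rw [← Nat.card_eq_fintype_card, card_PAR hp]
    push_cast
    ring
  rw [sum_decomp hp]
  rcases card_cases hp Z with h | h | h | h
  · -- Z = ⊥
    have hZ : Z = ⊥ := card_eq_one.mp h
    subst hZ
    have hl : (∑ t : PAR p, mub p (lineMap p t) *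
        (if (⊥ : AddSubgroup (VV p)) ≤ lineMap p t then (1:ℤ) else 0)) = ∑ _t : PAR p, (p:ℤ) :=
      Finset.sum_congr rfl (fun t _ => by rw [if_pos (bot_le), mul_one, mub_line hp t])
    have hq : (∑ t : PAR p, mub p (planeMap p t) *
        (if (⊥ : AddSubgroup (VV p)) ≤ planeMap p t then (1:ℤ) else 0)) =
        ∑ _t : PAR p, (-1:ℤ) :=
      Finset.sum_congr rfl (fun t _ => by rw [if_pos (bot_le), mul_one, mub_plane hp t])
    rw [if_neg (show (⊥ : AddSubgroup (VV p)) ≠ ⊤ from fun e => by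
      have h7 := card_top_VV hp
      rw [← e, cb] at h7
      set q2 := p^2
      set q3 := p^3
      omega)]
    rw [if_pos (le_refl (⊥ : AddSubgroup (VV p))), mul_one, if_pos (bot_le), mul_one,
      mub_top hp, mub_bot hp, hl, hq, Finset.sum_const, Finset.sum_const, Finset.card_univ,
      nsmul_eq_mul, nsmul_eq_mul, hcarP]
    ring
  · -- card Z = p : Z is a line
    obtain ⟨t0, ht0⟩ := line_complete hp Z h
    have hZne : Z ≠ ⊤ := fun e => by
      rw [e, card_top_VV hp] at h
      set q2 := p^2
      set q3 := p^3
      omega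
    have hbot : ¬ (Z ≤ ⊥) := fun e => by
      have h6 : Z = ⊥ := le_bot_iff.mp e
      rw [h6, cb] at h
      set q2 := p^2
      set q3 := p^3
      omega
    have hline : ∀ t : PAR p, (Z ≤ lineMap p t) ↔ t = t0 := by
      intro t
      constructor
      · intro hle
        have h5 : Z = lineMap p t := sub_eq_of_le_card hle (by rw [card_lineMap hp, h])
        exact lineMap_injective hp (h5.symm.trans ht0.symm)
      · rintro rfl
        exact le_of_eq ht0.symm
    have hl : (∑ t : PAR p, mub p (lineMap p t) * (if Z ≤ lineMap p t then (1:ℤ) else 0)) =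
        ∑ t : PAR p, (if t = t0 then (p:ℤ) else 0) :=
      Finset.sum_congr rfl (fun t _ => by
        rw [mub_line hp t, if_congr (hline t) rfl rfl, mul_ite, mul_one, mul_zero])
    have hq : (∑ t : PAR p, mub p (planeMap p t) * (if Z ≤ planeMap p t then (1:ℤ) else 0)) =
        ∑ t : PAR p, (if Z ≤ planeMap p t then (-1:ℤ) else 0) :=
      Finset.sum_congr rfl (fun t _ => by
        rw [mub_plane hp t, mul_ite, mul_one, mul_zero])
    rw [if_neg hZne, if_neg hbot, mul_zero, if_pos le_top, mub_top hp, mul_one, hl, hq,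
      Finset.sum_ite_eq' Finset.univ t0 (fun _ => (p:ℤ)), if_pos (Finset.mem_univ t0),
      sum_ite_count (fun t : PAR p => Z ≤ planeMap p t) (-1),
      count_planes_over_line hp Z h]
    push_cast
    ring
  · -- card Z = p^2 : Z is a plane
    obtain ⟨t0, ht0⟩ := plane_complete hp Z h
    have hZne : Z ≠ ⊤ := fun e => by
      rw [e, card_top_VV hp] at h
      set q2 := p^2
      set q3 := p^3
      omega
    have hbot : ¬ (Z ≤ ⊥) := fun e => by
      have h6 : Z = ⊥ := le_bot_iff.mp e
      rw [h6, cb] at h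
      set q2 := p^2
      set q3 := p^3
      omega
    have hline : ∀ t : PAR p, ¬ (Z ≤ lineMap p t) := by
      intro t hle
      have hdvd := card_dvd_of_le hle
      rw [h, card_lineMap hp] at hdvd
      have h6 := Nat.le_of_dvd (by omega) hdvd
      set q2 := p^2
      set q3 := p^3
      omega
    have hplane : ∀ t : PAR p, (Z ≤ planeMap p t) ↔ t = t0 := by
      intro t
      constructor
      · intro hle
        have h5 : Z = planeMap p t := sub_eq_of_le_card hle (by rw [card_planeMap hp, h])
        exact planeMap_injective hp (h5.symm.trans ht0.symm)
      · rintro rfl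
        exact le_of_eq ht0.symm
    have hl : (∑ t : PAR p, mub p (lineMap p t) * (if Z ≤ lineMap p t then (1:ℤ) else 0)) =
        ∑ _t : PAR p, (0:ℤ) :=
      Finset.sum_congr rfl (fun t _ => by rw [if_neg (hline t), mul_zero])
    have hq : (∑ t : PAR p, mub p (planeMap p t) * (if Z ≤ planeMap p t then (1:ℤ) else 0)) =
        ∑ t : PAR p, (if t = t0 then (-1:ℤ) else 0) :=
      Finset.sum_congr rfl (fun t _ => by
        rw [mub_plane hp t, if_congr (hplane t) rfl rfl, mul_ite, mul_one, mul_zero])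
    rw [if_neg hZne, if_neg hbot, mul_zero, if_pos le_top, mub_top hp, mul_one, hl, hq,
      Finset.sum_const_zero,
      Finset.sum_ite_eq' Finset.univ t0 (fun _ => (-1:ℤ)), if_pos (Finset.mem_univ t0)]
    ring
  · -- Z = ⊤
    have hZ : Z = ⊤ := top_of_card hp h
    subst hZ
    have hbot : ¬ ((⊤ : AddSubgroup (VV p)) ≤ ⊥) := fun e => by
      have h6 : (⊤ : AddSubgroup (VV p)) = ⊥ := le_bot_iff.mp e
      have h7 := card_top_VV hp
      rw [h6, cb] at h7
      set q2 := p^2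
      set q3 := p^3
      omega
    have hline : ∀ t : PAR p, ¬ ((⊤ : AddSubgroup (VV p)) ≤ lineMap p t) := by
      intro t hle
      have h5 : lineMap p t = ⊤ := top_le_iff.mp hle
      have h6 := card_lineMap hp t
      rw [h5, card_top_VV hp] at h6
      set q2 := p^2
      set q3 := p^3
      omega
    have hplane : ∀ t : PAR p, ¬ ((⊤ : AddSubgroup (VV p)) ≤ planeMap p t) := by
      intro t hle
      have h5 : planeMap p t = ⊤ := top_le_iff.mp hle
      have h6 := card_planeMap hp t
      rw [h5, card_top_VV hp] at h6
      set q2 := p^2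
      set q3 := p^3
      omega
    have hl : (∑ t : PAR p, mub p (lineMap p t) *
        (if (⊤ : AddSubgroup (VV p)) ≤ lineMap p t then (1:ℤ) else 0)) = ∑ _t : PAR p, (0:ℤ) :=
      Finset.sum_congr rfl (fun t _ => by rw [if_neg (hline t), mul_zero])
    have hq : (∑ t : PAR p, mub p (planeMap p t) *
        (if (⊤ : AddSubgroup (VV p)) ≤ planeMap p t then (1:ℤ) else 0)) = ∑ _t : PAR p, (0:ℤ) :=
      Finset.sum_congr rfl (fun t _ => by rw [if_neg (hplane t), mul_zero])
    rw [if_pos rfl, if_neg hbot, mul_zero, if_pos le_top, mub_top hp, mul_one, hl, hq,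
      Finset.sum_const_zero]
    ring

end MobiusId
section Gside
open Function AddSubgroup

variable {p a b c : ℕ}

variable (p a b c) in
abbrev GG := ZMod (p^a) × ZMod (p^b) × ZMod (p^c)

variable (p a b c) in
noncomputable def pihom (ha : a ≠ 0) (hb : b ≠ 0) (hc : c ≠ 0) : GG p a b c →+ VV p :=
  (redh p ha).prodMap ((redh p hb).prodMap (redh p hc))

lemma pihom_apply (ha : a ≠ 0) (hb : b ≠ 0) (hc : c ≠ 0) (g : GG p a b c) :
    pihom p a b c ha hb hc g = (redh p ha g.1, redh p hb g.2.1, redh p hc g.2.2) := rfl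

lemma pihom_surjective (hp : p.Prime) (ha : a ≠ 0) (hb : b ≠ 0) (hc : c ≠ 0) :
    Surjective (pihom p a b c ha hb hc) := by
  intro v
  obtain ⟨x, hx⟩ := redh_surjective hp ha v.1
  obtain ⟨y, hy⟩ := redh_surjective hp hb v.2.1
  obtain ⟨z, hz⟩ := redh_surjective hp hc v.2.2
  exact ⟨(x, y, z), by rw [pihom_apply, hx, hy, hz]⟩

lemma GG_tor (hba : b ≤ a) (hca : c ≤ a) (g : GG p a b c) : p^a • g = 0 := by
  refine Prod.ext ?_ (Prod.ext ?_ ?_)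
  · show p^a • g.1 = 0
    rw [nsmul_eq_mul, ZMod.natCast_self, zero_mul]
  · show p^a • g.2.1 = 0
    rw [nsmul_eq_mul]
    have h1 : ((p^a : ℕ) : ZMod (p^b)) = 0 :=
      (ZMod.natCast_eq_zero_iff _ _).mpr (pow_dvd_pow p hba)
    rw [h1, zero_mul]
  · show p^a • g.2.2 = 0
    rw [nsmul_eq_mul]
    have h1 : ((p^a : ℕ) : ZMod (p^c)) = 0 :=
      (ZMod.natCast_eq_zero_iff _ _).mpr (pow_dvd_pow p hca)
    rw [h1, zero_mul]

lemma ker_smul (hp : p.Prime) (ha : a ≠ 0) (hb : b ≠ 0) (hc : c ≠ 0) (g : GG p a b c)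
    (hg : pihom p a b c ha hb hc g = 0) : ∃ h, g = p • h := by
  haveI : NeZero (p^(a-1)) := ⟨pow_ne_zero _ hp.ne_zero⟩
  haveI : NeZero (p^(b-1)) := ⟨pow_ne_zero _ hp.ne_zero⟩
  haveI : NeZero (p^(c-1)) := ⟨pow_ne_zero _ hp.ne_zero⟩
  rw [pihom_apply] at hg
  have h1 : redh p ha g.1 = 0 := congrArg Prod.fst hg
  have h2 : redh p hb g.2.1 = 0 := congrArg (fun v : VV p => v.2.1) hg
  have h3 : redh p hc g.2.2 = 0 := congrArg (fun v : VV p => v.2.2) hg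
  obtain ⟨u1, hu1⟩ := exists_pmul hp ha g.1 h1
  obtain ⟨u2, hu2⟩ := exists_pmul hp hb g.2.1 h2
  obtain ⟨u3, hu3⟩ := exists_pmul hp hc g.2.2 h3
  refine ⟨((u1.val : ZMod (p^a)), (u2.val : ZMod (p^b)), (u3.val : ZMod (p^c))), ?_⟩
  refine Prod.ext ?_ (Prod.ext ?_ ?_)
  · show g.1 = p • ((u1.val : ℕ) : ZMod (p^a))
    rw [← hu1, pmul_apply hp ha, nsmul_eq_mul]
    push_cast
    ring
  · show g.2.1 = p • ((u2.val : ℕ) : ZMod (p^b))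
    rw [← hu2, pmul_apply hp hb, nsmul_eq_mul]
    push_cast
    ring
  · show g.2.2 = p • ((u3.val : ℕ) : ZMod (p^c))
    rw [← hu3, pmul_apply hp hc, nsmul_eq_mul]
    push_cast
    ring

lemma frattiniGG (hp : p.Prime) (hba : b ≤ a) (hca : c ≤ a)
    (N : AddSubgroup (GG p a b c))
    (hN : ∀ g : GG p a b c, ∃ n ∈ N, ∃ h, g = n + p • h) : N = ⊤ := by
  have key : ∀ i : ℕ, ∀ g : GG p a b c, ∃ n ∈ N, ∃ h, g = n + p^i • h := by
    intro i
    induction i with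
    | zero => intro g; exact ⟨0, N.zero_mem, g, by simp⟩
    | succ i ih =>
      intro g
      obtain ⟨n, hn, h, rfl⟩ := ih g
      obtain ⟨m, hm, h', rfl⟩ := hN h
      refine ⟨n + p^i • m, add_mem hn (nsmul_mem hm _), h', ?_⟩
      rw [smul_add, smul_smul, ← pow_succ, add_assoc]
  rw [eq_top_iff']
  intro g
  obtain ⟨n, hn, h, hg⟩ := key a g
  rw [GG_tor hba hca, add_zero] at hg
  exact hg ▸ hn

lemma sup_iff (hp : p.Prime) (ha : a ≠ 0) (hb : b ≠ 0) (hc : c ≠ 0)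
    (hba : b ≤ a) (hca : c ≤ a) (A B : AddSubgroup (GG p a b c)) :
    A ⊔ B = ⊤ ↔
      (A.map (pihom p a b c ha hb hc)) ⊔ (B.map (pihom p a b c ha hb hc)) = ⊤ := by
  constructor
  · intro hAB
    rw [← AddSubgroup.map_sup, hAB]
    rw [← AddMonoidHom.range_eq_map]
    exact AddMonoidHom.range_eq_top.mpr (pihom_surjective hp ha hb hc)
  · intro hUV
    apply frattiniGG hp hba hca
    intro g
    have hg : pihom p a b c ha hb hc g ∈
        (A.map (pihom p a b c ha hb hc)) ⊔ (B.map (pihom p a b c ha hb hc)) := by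
      rw [hUV]; exact mem_top _
    rw [AddSubgroup.mem_sup] at hg
    obtain ⟨u, hu, v, hv, huv⟩ := hg
    obtain ⟨x, hx, rfl⟩ := hu
    obtain ⟨y, hy, rfl⟩ := hv
    have h0 : pihom p a b c ha hb hc (g - x - y) = 0 := by
      rw [map_sub, map_sub, ← huv]
      abel
    obtain ⟨h, hh⟩ := ker_smul hp ha hb hc _ h0
    refine ⟨x + y, add_mem (mem_sup_left hx) (mem_sup_right hy), h, ?_⟩
    rw [← hh]
    abel

end Gside
section Preimages
open Function AddSubgroup

variable {p a b c : ℕ}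

lemma redh_scaled (hp : p.Prime) {m n : ℕ} (hm : m ≠ 0) (h : m ≤ n) (hn : n ≠ 0)
    (α : ZMod p) (x : ZMod (p^n)) :
    redh p hm (α.val • rrh p h x) = α * redh p hn x := by
  haveI : NeZero p := ⟨hp.ne_zero⟩
  rw [map_nsmul, redh_rrh hp hm h, nsmul_eq_mul, ZMod.natCast_val, ZMod.cast_id]

lemma comap_card_top (hp : p.Prime) (ha : a ≠ 0) (hb : b ≠ 0) (hc : c ≠ 0) :
    Nat.card (AddSubgroup ↥((⊤ : AddSubgroup (VV p)).comap (pihom p a b c ha hb hc))) =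
      Nat.card (AddSubgroup (GG p a b c)) := by
  rw [AddSubgroup.comap_top]
  exact cardSub_congr (AddSubgroup.topEquiv : ↥(⊤ : AddSubgroup (GG p a b c)) ≃+ _)

lemma comap_card_bot (hp : p.Prime) (ha : a ≠ 0) (hb : b ≠ 0) (hc : c ≠ 0) :
    Nat.card (AddSubgroup ↥((⊥ : AddSubgroup (VV p)).comap (pihom p a b c ha hb hc))) =
      Nat.card (AddSubgroup (GG p (a-1) (b-1) (c-1))) := by
  set φ : GG p (a-1) (b-1) (c-1) →+ GG p a b c := AddMonoidHom.mk'
    (fun g => (pmul p ha g.1, pmul p hb g.2.1, pmul p hc g.2.2))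
    (fun u v => by
      refine Prod.ext ?_ (Prod.ext ?_ ?_) <;> simp) with hφ
  have hinj : Injective φ := by
    intro u v huv
    refine Prod.ext ?_ (Prod.ext ?_ ?_)
    · exact pmul_injective hp ha (congrArg (fun g : GG p a b c => g.1) huv)
    · exact pmul_injective hp hb (congrArg (fun g : GG p a b c => g.2.1) huv)
    · exact pmul_injective hp hc (congrArg (fun g : GG p a b c => g.2.2) huv)
  have hrange : φ.range = (⊥ : AddSubgroup (VV p)).comap (pihom p a b c ha hb hc) := by
    apply le_antisymm
    · rintro g0 ⟨g, rfl⟩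
      rw [mem_comap, mem_bot, pihom_apply]
      refine Prod.ext ?_ (Prod.ext ?_ ?_) <;>
        simp [hφ, redh_pmul hp]
    · intro g hg
      rw [mem_comap, mem_bot, pihom_apply] at hg
      obtain ⟨u1, hu1⟩ := exists_pmul hp ha g.1 (congrArg Prod.fst hg)
      obtain ⟨u2, hu2⟩ := exists_pmul hp hb g.2.1 (congrArg (fun v : VV p => v.2.1) hg)
      obtain ⟨u3, hu3⟩ := exists_pmul hp hc g.2.2 (congrArg (fun v : VV p => v.2.2) hg)
      exact ⟨(u1, u2, u3), Prod.ext hu1 (Prod.ext hu2 hu3)⟩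
  exact (cardSub_congr ((AddMonoidHom.ofInjective hinj).trans
    (AddEquiv.addSubgroupCongr hrange))).symm

lemma comap_card_P23 (hp : p.Prime) (ha : a ≠ 0) (hb : b ≠ 0) (hc : c ≠ 0) :
    Nat.card (AddSubgroup ↥((P23 p).comap (pihom p a b c ha hb hc))) =
      Nat.card (AddSubgroup (GG p (a-1) b c)) := by
  set φ : GG p (a-1) b c →+ GG p a b c := AddMonoidHom.mk'
    (fun g => (pmul p ha g.1, g.2.1, g.2.2))
    (fun u v => by
      refine Prod.ext ?_ (Prod.ext ?_ ?_) <;> simp) with hφ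
  have hinj : Injective φ := by
    intro u v huv
    refine Prod.ext ?_ (Prod.ext ?_ ?_)
    · exact pmul_injective hp ha (congrArg (fun g : GG p a b c => g.1) huv)
    · exact congrArg (fun g : GG p a b c => g.2.1) huv
    · exact congrArg (fun g : GG p a b c => g.2.2) huv
  have hrange : φ.range = (P23 p).comap (pihom p a b c ha hb hc) := by
    apply le_antisymm
    · rintro g0 ⟨g, rfl⟩
      show redh p ha (pmul p ha g.1) = 0
      exact redh_pmul hp ha g.1
    · intro g hg
      have hg1 : redh p ha g.1 = 0 := hg
      obtain ⟨u1, hu1⟩ := exists_pmul hp ha g.1 hg1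
      exact ⟨(u1, g.2.1, g.2.2), Prod.ext hu1 (Prod.ext rfl rfl)⟩
  exact (cardSub_congr ((AddMonoidHom.ofInjective hinj).trans
    (AddEquiv.addSubgroupCongr hrange))).symm

lemma comap_card_P13 (hp : p.Prime) (ha : a ≠ 0) (hb : b ≠ 0) (hc : c ≠ 0)
    (hba : b ≤ a) (α : ZMod p) :
    Nat.card (AddSubgroup ↥((P13 p α).comap (pihom p a b c ha hb hc))) =
      Nat.card (AddSubgroup (GG p a (b-1) c)) := by
  set φ : GG p a (b-1) c →+ GG p a b c := AddMonoidHom.mk'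
    (fun g => (g.1, α.val • rrh p hba g.1 + pmul p hb g.2.1, g.2.2))
    (fun u v => by
      refine Prod.ext rfl (Prod.ext ?_ rfl)
      show α.val • rrh p hba (u.1 + v.1) + pmul p hb (u.2.1 + v.2.1) =
        (α.val • rrh p hba u.1 + pmul p hb u.2.1) + (α.val • rrh p hba v.1 + pmul p hb v.2.1)
      rw [map_add, smul_add, map_add]
      abel) with hφ
  have hinj : Injective φ := by
    intro u v huv
    have h1 : u.1 = v.1 := congrArg (fun g : GG p a b c => g.1) huv
    have h2 := congrArg (fun g : GG p a b c => g.2.1) huv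
    simp only [hφ, AddMonoidHom.mk'_apply] at h2
    rw [h1] at h2
    refine Prod.ext h1 (Prod.ext ?_ ?_)
    · exact pmul_injective hp hb (add_left_cancel h2)
    · exact congrArg (fun g : GG p a b c => g.2.2) huv
  have hrange : φ.range = (P13 p α).comap (pihom p a b c ha hb hc) := by
    apply le_antisymm
    · rintro g0 ⟨g, rfl⟩
      show redh p hb (α.val • rrh p hba g.1 + pmul p hb g.2.1) = α * redh p ha g.1
      rw [map_add, redh_pmul hp hb, add_zero, redh_scaled hp hb hba ha]
    · intro g hg
      have hg1 : redh p hb g.2.1 = α * redh p ha g.1 := hg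
      have hs : redh p hb (g.2.1 - α.val • rrh p hba g.1) = 0 := by
        rw [map_sub, redh_scaled hp hb hba ha, hg1, sub_self]
      obtain ⟨u2, hu2⟩ := exists_pmul hp hb _ hs
      refine ⟨(g.1, u2, g.2.2), Prod.ext rfl (Prod.ext ?_ rfl)⟩
      show α.val • rrh p hba g.1 + pmul p hb u2 = g.2.1
      rw [hu2]
      ring
  exact (cardSub_congr ((AddMonoidHom.ofInjective hinj).trans
    (AddEquiv.addSubgroupCongr hrange))).symm

lemma comap_card_P12 (hp : p.Prime) (ha : a ≠ 0) (hb : b ≠ 0) (hc : c ≠ 0)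
    (hba : b ≤ a) (hcb : c ≤ b) (α β : ZMod p) :
    Nat.card (AddSubgroup ↥((P12 p α β).comap (pihom p a b c ha hb hc))) =
      Nat.card (AddSubgroup (GG p a b (c-1))) := by
  have hca : c ≤ a := hcb.trans hba
  set φ : GG p a b (c-1) →+ GG p a b c := AddMonoidHom.mk'
    (fun g => (g.1, g.2.1,
      α.val • rrh p hca g.1 + β.val • rrh p hcb g.2.1 + pmul p hc g.2.2))
    (fun u v => by
      refine Prod.ext rfl (Prod.ext rfl ?_)
      show α.val • rrh p hca (u.1 + v.1) + β.val • rrh p hcb (u.2.1 + v.2.1) +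
          pmul p hc (u.2.2 + v.2.2) =
        (α.val • rrh p hca u.1 + β.val • rrh p hcb u.2.1 + pmul p hc u.2.2) +
        (α.val • rrh p hca v.1 + β.val • rrh p hcb v.2.1 + pmul p hc v.2.2)
      rw [map_add, map_add, map_add, smul_add, smul_add]
      abel) with hφ
  have hinj : Injective φ := by
    intro u v huv
    have h1 : u.1 = v.1 := congrArg (fun g : GG p a b c => g.1) huv
    have h2 : u.2.1 = v.2.1 := congrArg (fun g : GG p a b c => g.2.1) huv
    have h3 := congrArg (fun g : GG p a b c => g.2.2) huv
    simp only [hφ, AddMonoidHom.mk'_apply] at h3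
    rw [h1, h2] at h3
    exact Prod.ext h1 (Prod.ext h2 (pmul_injective hp hc (add_left_cancel h3)))
  have hrange : φ.range = (P12 p α β).comap (pihom p a b c ha hb hc) := by
    apply le_antisymm
    · rintro g0 ⟨g, rfl⟩
      show redh p hc (α.val • rrh p hca g.1 + β.val • rrh p hcb g.2.1 + pmul p hc g.2.2)
          = α * redh p ha g.1 + β * redh p hb g.2.1
      rw [map_add, map_add, redh_pmul hp hc, add_zero, redh_scaled hp hc hca ha,
        redh_scaled hp hc hcb hb]
    · intro g hg
      have hg1 : redh p hc g.2.2 = α * redh p ha g.1 + β * redh p hb g.2.1 := hg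
      have hs : redh p hc (g.2.2 - (α.val • rrh p hca g.1 + β.val • rrh p hcb g.2.1)) = 0 := by
        rw [map_sub, map_add, redh_scaled hp hc hca ha, redh_scaled hp hc hcb hb, hg1, sub_self]
      obtain ⟨u3, hu3⟩ := exists_pmul hp hc _ hs
      refine ⟨(g.1, g.2.1, u3), Prod.ext rfl (Prod.ext rfl ?_)⟩
      show α.val • rrh p hca g.1 + β.val • rrh p hcb g.2.1 + pmul p hc u3 = g.2.2
      rw [hu3]
      ring
  exact (cardSub_congr ((AddMonoidHom.ofInjective hinj).trans
    (AddEquiv.addSubgroupCongr hrange))).symm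

lemma comap_card_L1 (hp : p.Prime) (ha : a ≠ 0) (hb : b ≠ 0) (hc : c ≠ 0)
    (hba : b ≤ a) (hcb : c ≤ b) (β γ : ZMod p) :
    Nat.card (AddSubgroup ↥((L1 p β γ).comap (pihom p a b c ha hb hc))) =
      Nat.card (AddSubgroup (GG p a (b-1) (c-1))) := by
  have hca : c ≤ a := hcb.trans hba
  set φ : GG p a (b-1) (c-1) →+ GG p a b c := AddMonoidHom.mk'
    (fun g => (g.1, β.val • rrh p hba g.1 + pmul p hb g.2.1,
      γ.val • rrh p hca g.1 + pmul p hc g.2.2))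
    (fun u v => by
      refine Prod.ext rfl (Prod.ext ?_ ?_)
      · show β.val • rrh p hba (u.1 + v.1) + pmul p hb (u.2.1 + v.2.1) =
          (β.val • rrh p hba u.1 + pmul p hb u.2.1) + (β.val • rrh p hba v.1 + pmul p hb v.2.1)
        rw [map_add, smul_add, map_add]
        abel
      · show γ.val • rrh p hca (u.1 + v.1) + pmul p hc (u.2.2 + v.2.2) =
          (γ.val • rrh p hca u.1 + pmul p hc u.2.2) + (γ.val • rrh p hca v.1 + pmul p hc v.2.2)
        rw [map_add, smul_add, map_add]
        abel) with hφ
  have hinj : Injective φ := by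
    intro u v huv
    have h1 : u.1 = v.1 := congrArg (fun g : GG p a b c => g.1) huv
    have h2 := congrArg (fun g : GG p a b c => g.2.1) huv
    have h3 := congrArg (fun g : GG p a b c => g.2.2) huv
    simp only [hφ, AddMonoidHom.mk'_apply] at h2 h3
    rw [h1] at h2 h3
    exact Prod.ext h1 (Prod.ext (pmul_injective hp hb (add_left_cancel h2))
      (pmul_injective hp hc (add_left_cancel h3)))
  have hrange : φ.range = (L1 p β γ).comap (pihom p a b c ha hb hc) := by
    apply le_antisymm
    · rintro g0 ⟨g, rfl⟩
      refine ⟨?_, ?_⟩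
      · show redh p hb (β.val • rrh p hba g.1 + pmul p hb g.2.1) = β * redh p ha g.1
        rw [map_add, redh_pmul hp hb, add_zero, redh_scaled hp hb hba ha]
      · show redh p hc (γ.val • rrh p hca g.1 + pmul p hc g.2.2) = γ * redh p ha g.1
        rw [map_add, redh_pmul hp hc, add_zero, redh_scaled hp hc hca ha]
    · intro g hg
      obtain ⟨hg1, hg2⟩ := hg
      have hg1' : redh p hb g.2.1 = β * redh p ha g.1 := hg1
      have hg2' : redh p hc g.2.2 = γ * redh p ha g.1 := hg2
      have hs1 : redh p hb (g.2.1 - β.val • rrh p hba g.1) = 0 := by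
        rw [map_sub, redh_scaled hp hb hba ha, hg1', sub_self]
      have hs2 : redh p hc (g.2.2 - γ.val • rrh p hca g.1) = 0 := by
        rw [map_sub, redh_scaled hp hc hca ha, hg2', sub_self]
      obtain ⟨u2, hu2⟩ := exists_pmul hp hb _ hs1
      obtain ⟨u3, hu3⟩ := exists_pmul hp hc _ hs2
      refine ⟨(g.1, u2, u3), Prod.ext rfl (Prod.ext ?_ ?_)⟩
      · show β.val • rrh p hba g.1 + pmul p hb u2 = g.2.1
        rw [hu2]; ring
      · show γ.val • rrh p hca g.1 + pmul p hc u3 = g.2.2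
        rw [hu3]; ring
  exact (cardSub_congr ((AddMonoidHom.ofInjective hinj).trans
    (AddEquiv.addSubgroupCongr hrange))).symm

lemma comap_card_L2 (hp : p.Prime) (ha : a ≠ 0) (hb : b ≠ 0) (hc : c ≠ 0)
    (hcb : c ≤ b) (γ : ZMod p) :
    Nat.card (AddSubgroup ↥((L2 p γ).comap (pihom p a b c ha hb hc))) =
      Nat.card (AddSubgroup (GG p (a-1) b (c-1))) := by
  set φ : GG p (a-1) b (c-1) →+ GG p a b c := AddMonoidHom.mk'
    (fun g => (pmul p ha g.1, g.2.1, γ.val • rrh p hcb g.2.1 + pmul p hc g.2.2))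
    (fun u v => by
      refine Prod.ext ?_ (Prod.ext rfl ?_)
      · show pmul p ha (u.1 + v.1) = pmul p ha u.1 + pmul p ha v.1
        rw [map_add]
      · show γ.val • rrh p hcb (u.2.1 + v.2.1) + pmul p hc (u.2.2 + v.2.2) =
          (γ.val • rrh p hcb u.2.1 + pmul p hc u.2.2) + (γ.val • rrh p hcb v.2.1 + pmul p hc v.2.2)
        rw [map_add, smul_add, map_add]
        abel) with hφ
  have hinj : Injective φ := by
    intro u v huv
    have h1 := congrArg (fun g : GG p a b c => g.1) huv
    have h2 : u.2.1 = v.2.1 := congrArg (fun g : GG p a b c => g.2.1) huv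
    have h3 := congrArg (fun g : GG p a b c => g.2.2) huv
    simp only [hφ, AddMonoidHom.mk'_apply] at h1 h3
    rw [h2] at h3
    exact Prod.ext (pmul_injective hp ha h1)
      (Prod.ext h2 (pmul_injective hp hc (add_left_cancel h3)))
  have hrange : φ.range = (L2 p γ).comap (pihom p a b c ha hb hc) := by
    apply le_antisymm
    · rintro g0 ⟨g, rfl⟩
      refine ⟨?_, ?_⟩
      · show redh p ha (pmul p ha g.1) = 0
        exact redh_pmul hp ha g.1
      · show redh p hc (γ.val • rrh p hcb g.2.1 + pmul p hc g.2.2) = γ * redh p hb g.2.1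
        rw [map_add, redh_pmul hp hc, add_zero, redh_scaled hp hc hcb hb]
    · intro g hg
      obtain ⟨hg1, hg2⟩ := hg
      have hg1' : redh p ha g.1 = 0 := hg1
      have hg2' : redh p hc g.2.2 = γ * redh p hb g.2.1 := hg2
      have hs2 : redh p hc (g.2.2 - γ.val • rrh p hcb g.2.1) = 0 := by
        rw [map_sub, redh_scaled hp hc hcb hb, hg2', sub_self]
      obtain ⟨u1, hu1⟩ := exists_pmul hp ha _ hg1'
      obtain ⟨u3, hu3⟩ := exists_pmul hp hc _ hs2
      refine ⟨(u1, g.2.1, u3), Prod.ext hu1 (Prod.ext rfl ?_)⟩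
      show γ.val • rrh p hcb g.2.1 + pmul p hc u3 = g.2.2
      rw [hu3]; ring
  exact (cardSub_congr ((AddMonoidHom.ofInjective hinj).trans
    (AddEquiv.addSubgroupCongr hrange))).symm

lemma comap_card_L3 (hp : p.Prime) (ha : a ≠ 0) (hb : b ≠ 0) (hc : c ≠ 0) :
    Nat.card (AddSubgroup ↥((L3 p).comap (pihom p a b c ha hb hc))) =
      Nat.card (AddSubgroup (GG p (a-1) (b-1) c)) := by
  set φ : GG p (a-1) (b-1) c →+ GG p a b c := AddMonoidHom.mk'
    (fun g => (pmul p ha g.1, pmul p hb g.2.1, g.2.2))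
    (fun u v => by
      refine Prod.ext ?_ (Prod.ext ?_ rfl) <;> simp) with hφ
  have hinj : Injective φ := by
    intro u v huv
    exact Prod.ext (pmul_injective hp ha (congrArg (fun g : GG p a b c => g.1) huv))
      (Prod.ext (pmul_injective hp hb (congrArg (fun g : GG p a b c => g.2.1) huv))
        (congrArg (fun g : GG p a b c => g.2.2) huv))
  have hrange : φ.range = (L3 p).comap (pihom p a b c ha hb hc) := by
    apply le_antisymm
    · rintro g0 ⟨g, rfl⟩
      exact ⟨redh_pmul hp ha g.1, redh_pmul hp hb g.2.1⟩
    · intro g hg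
      obtain ⟨hg1, hg2⟩ := hg
      obtain ⟨u1, hu1⟩ := exists_pmul hp ha g.1 hg1
      obtain ⟨u2, hu2⟩ := exists_pmul hp hb g.2.1 hg2
      exact ⟨(u1, u2, g.2.2), Prod.ext hu1 (Prod.ext hu2 rfl)⟩
  exact (cardSub_congr ((AddMonoidHom.ofInjective hinj).trans
    (AddEquiv.addSubgroupCongr hrange))).symm

end Preimages
open Function AddSubgroup in
open scoped Classical in
theorem F2_rank_three (p l1 l2 l3 : ℕ) (hp : p.Prime)
    (h12 : l2 ≤ l1) (h23 : l3 ≤ l2) (h3 : 1 ≤ l3) :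
    (F2 (ZMod (p ^ l1) × ZMod (p ^ l2) × ZMod (p ^ l3)) : ℤ) =
      -(p : ℤ) ^ 3 * (f p (l1 - 1) (l2 - 1) (l3 - 1) : ℤ) ^ 2
      + (p : ℤ) * ((f p (l1 - 1) (l2 - 1) l3 : ℤ) ^ 2
          + (p : ℤ) * (f p (l1 - 1) l2 (l3 - 1) : ℤ) ^ 2
          + (p : ℤ) ^ 2 * (f p l1 (l2 - 1) (l3 - 1) : ℤ) ^ 2)
      - ((f p (l1 - 1) l2 l3 : ℤ) ^ 2
          + (p : ℤ) * (f p l1 (l2 - 1) l3 : ℤ) ^ 2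
          + (p : ℤ) ^ 2 * (f p l1 l2 (l3 - 1) : ℤ) ^ 2)
      + (f p l1 l2 l3 : ℤ) ^ 2 := by
  have hna : l1 ≠ 0 := by omega
  have hnb : l2 ≠ 0 := by omega
  have hnc : l3 ≠ 0 := by omega
  haveI : NeZero p := ⟨hp.ne_zero⟩
  haveI : NeZero (p^l1) := ⟨pow_ne_zero _ hp.ne_zero⟩
  haveI : NeZero (p^l2) := ⟨pow_ne_zero _ hp.ne_zero⟩
  haveI : NeZero (p^l3) := ⟨pow_ne_zero _ hp.ne_zero⟩
  letI : Fintype (AddSubgroup (VV p)) := Fintype.ofFinite _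
  letI : Fintype (PAR p) := inferInstance
  set π := pihom p l1 l2 l3 hna hnb hnc with hπdef
  set N : AddSubgroup (VV p) → ℕ :=
    fun U => Nat.card {A : AddSubgroup (GG p l1 l2 l3) // A.map π = U} with hNdef
  set SS : AddSubgroup (VV p) → ℕ :=
    fun Y => Nat.card (AddSubgroup ↥(Y.comap π)) with hSSdef
  -- Step 1: fibered count
  have hF2 : F2 (GG p l1 l2 l3) =
      ∑ y : AddSubgroup (VV p) × AddSubgroup (VV p),
        (if y.1 ⊔ y.2 = ⊤ then N y.1 * N y.2 else 0) := by
    have hsup : ∀ x : AddSubgroup (GG p l1 l2 l3) × AddSubgroup (GG p l1 l2 l3),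
        (x.1 ⊔ x.2 = ⊤) ↔ ((x.1.map π) ⊔ (x.2.map π) = ⊤) :=
      fun x => sup_iff hp hna hnb hnc h12 (h23.trans h12) x.1 x.2
    have e0 := Equiv.subtypeEquivRight hsup
    show Nat.card {x : AddSubgroup (GG p l1 l2 l3) × AddSubgroup (GG p l1 l2 l3) //
        x.1 ⊔ x.2 = ⊤} = _
    rw [Nat.card_congr e0]
    rw [card_fiber_sum (fun x : {x : AddSubgroup (GG p l1 l2 l3) ×
        AddSubgroup (GG p l1 l2 l3) // (x.1.map π) ⊔ (x.2.map π) = ⊤} =>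
          ((x.1.1.map π, x.1.2.map π) : AddSubgroup (VV p) × AddSubgroup (VV p)))]
    apply Finset.sum_congr rfl
    intro y _
    by_cases hy : y.1 ⊔ y.2 = ⊤
    · rw [if_pos hy]
      have e1 : {x : {x : AddSubgroup (GG p l1 l2 l3) × AddSubgroup (GG p l1 l2 l3) //
          (x.1.map π) ⊔ (x.2.map π) = ⊤} // (x.1.1.map π, x.1.2.map π) = y} ≃
          {A : AddSubgroup (GG p l1 l2 l3) // A.map π = y.1} ×
          {B : AddSubgroup (GG p l1 l2 l3) // B.map π = y.2} :=
        { toFun := fun x => (⟨x.1.1.1, congrArg Prod.fst x.2⟩, ⟨x.1.1.2, congrArg Prod.snd x.2⟩)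
          invFun := fun z => ⟨⟨(z.1.1, z.2.1), by
              rw [z.1.2, z.2.2]; exact hy⟩, by
              apply Prod.ext
              · exact z.1.2
              · exact z.2.2⟩
          left_inv := fun x => Subtype.ext (Subtype.ext rfl)
          right_inv := fun z => Prod.ext (Subtype.ext rfl) (Subtype.ext rfl) }
      rw [Nat.card_congr e1, Nat.card_prod]
    · rw [if_neg hy]
      have he : IsEmpty {x : {x : AddSubgroup (GG p l1 l2 l3) ×
          AddSubgroup (GG p l1 l2 l3) // (x.1.map π) ⊔ (x.2.map π) = ⊤} //
          (x.1.1.map π, x.1.2.map π) = y} := by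
        refine ⟨fun x => hy ?_⟩
        have h1 := x.1.2
        have h2 : x.1.1.1.map π = y.1 := congrArg Prod.fst x.2
        have h3 : x.1.1.2.map π = y.2 := congrArg Prod.snd x.2
        rw [← h2, ← h3]
        exact h1
      exact Nat.card_of_isEmpty
  -- Step 2: S-values as sums
  have hT : ∀ Y : AddSubgroup (VV p),
      (∑ U : AddSubgroup (VV p), (N U : ℤ) * (if U ≤ Y then 1 else 0)) = (SS Y : ℤ) := by
    intro Y
    have h1 : Nat.card {A : AddSubgroup (GG p l1 l2 l3) // A.map π ≤ Y} =
        ∑ U : AddSubgroup (VV p), (if U ≤ Y then N U else 0) := by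
      rw [card_fiber_sum (fun A : {A : AddSubgroup (GG p l1 l2 l3) // A.map π ≤ Y} =>
        A.1.map π)]
      apply Finset.sum_congr rfl
      intro U _
      by_cases hU : U ≤ Y
      · rw [if_pos hU]
        refine Nat.card_congr
          { toFun := fun A => ⟨A.1.1, A.2⟩
            invFun := fun A => ⟨⟨A.1, by rw [A.2]; exact hU⟩, A.2⟩
            left_inv := fun A => Subtype.ext (Subtype.ext rfl)
            right_inv := fun A => Subtype.ext rfl }
      · rw [if_neg hU]
        have he : IsEmpty {A : {A : AddSubgroup (GG p l1 l2 l3) // A.map π ≤ Y} //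
            A.1.map π = U} := ⟨fun A => hU (by rw [← A.2]; exact A.1.2)⟩
        exact Nat.card_of_isEmpty
    have h2 : Nat.card {A : AddSubgroup (GG p l1 l2 l3) // A.map π ≤ Y} = SS Y := by
      rw [hSSdef]
      have e2 := Equiv.subtypeEquivRight
        (fun A : AddSubgroup (GG p l1 l2 l3) =>
          AddSubgroup.map_le_iff_le_comap (f := π) (K := A) (H := Y))
      rw [Nat.card_congr e2, Nat.card_congr (subLEEquiv (Y.comap π))]
    calc (∑ U : AddSubgroup (VV p), (N U : ℤ) * (if U ≤ Y then 1 else 0)) =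
        ∑ U : AddSubgroup (VV p), ((if U ≤ Y then N U else 0 : ℕ) : ℤ) := by
          apply Finset.sum_congr rfl
          intro U _
          by_cases hU : U ≤ Y
          · rw [if_pos hU, if_pos hU, mul_one]
          · rw [if_neg hU, if_neg hU, mul_zero, Nat.cast_zero]
      _ = ((∑ U : AddSubgroup (VV p), (if U ≤ Y then N U else 0) : ℕ) : ℤ) := by
          rw [Nat.cast_sum]
      _ = (SS Y : ℤ) := by rw [← h1, h2]
  -- Step 3: Möbius inversion
  have hmain : (F2 (GG p l1 l2 l3) : ℤ) =
      ∑ Y : AddSubgroup (VV p), mub p Y * (SS Y : ℤ)^2 := by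
    rw [hF2]
    push_cast
    calc (∑ y : AddSubgroup (VV p) × AddSubgroup (VV p),
          (if y.1 ⊔ y.2 = ⊤ then (N y.1 : ℤ) * N y.2 else 0)) =
        ∑ y : AddSubgroup (VV p) × AddSubgroup (VV p),
          ((N y.1 : ℤ) * N y.2) * (if y.1 ⊔ y.2 = ⊤ then 1 else 0) := by
          apply Finset.sum_congr rfl
          intro y _
          rw [mul_ite, mul_one, mul_zero]
      _ = ∑ y : AddSubgroup (VV p) × AddSubgroup (VV p),
          ((N y.1 : ℤ) * N y.2) *
            (∑ Y : AddSubgroup (VV p), mub p Y * (if y.1 ⊔ y.2 ≤ Y then 1 else 0)) := by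
          apply Finset.sum_congr rfl
          intro y _
          rw [mobius_id hp (y.1 ⊔ y.2)]
      _ = ∑ y : AddSubgroup (VV p) × AddSubgroup (VV p),
          ∑ Y : AddSubgroup (VV p),
            ((N y.1 : ℤ) * N y.2) * (mub p Y * (if y.1 ⊔ y.2 ≤ Y then 1 else 0)) := by
          apply Finset.sum_congr rfl
          intro y _
          rw [Finset.mul_sum]
      _ = ∑ Y : AddSubgroup (VV p),
          ∑ y : AddSubgroup (VV p) × AddSubgroup (VV p),
            ((N y.1 : ℤ) * N y.2) * (mub p Y * (if y.1 ⊔ y.2 ≤ Y then 1 else 0)) :=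
          Finset.sum_comm
      _ = ∑ Y : AddSubgroup (VV p),
          mub p Y * ∑ y : AddSubgroup (VV p) × AddSubgroup (VV p),
            ((N y.1 : ℤ) * (if y.1 ≤ Y then 1 else 0)) *
            ((N y.2 : ℤ) * (if y.2 ≤ Y then 1 else 0)) := by
          apply Finset.sum_congr rfl
          intro Y _
          rw [Finset.mul_sum]
          apply Finset.sum_congr rfl
          intro y _
          by_cases h1 : y.1 ≤ Y <;> by_cases h2 : y.2 ≤ Y
          · rw [if_pos h1, if_pos h2, if_pos (sup_le h1 h2)]
            ring
          · rw [if_pos h1, if_neg h2, if_neg (fun hs => h2 (le_trans le_sup_right hs))]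
            ring
          · rw [if_neg h1, if_pos h2, if_neg (fun hs => h1 (le_trans le_sup_left hs))]
            ring
          · rw [if_neg h1, if_neg h2, if_neg (fun hs => h1 (le_trans le_sup_left hs))]
            ring
      _ = ∑ Y : AddSubgroup (VV p), mub p Y * (SS Y : ℤ)^2 := by
          apply Finset.sum_congr rfl
          intro Y _
          congr 1
          simp only [Fintype.sum_prod_type]
          rw [sq, ← hT Y]
          rw [Finset.sum_mul_sum]
  rw [hmain, sum_decomp hp (fun Y => mub p Y * (SS Y : ℤ)^2)]
  -- Step 4: evaluate the pieces
  have hSbot : SS ⊥ = f p (l1-1) (l2-1) (l3-1) := comap_card_bot hp hna hnb hnc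
  have hStop : SS ⊤ = f p l1 l2 l3 := comap_card_top hp hna hnb hnc
  have hlines : (∑ t : PAR p, mub p (lineMap p t) * (SS (lineMap p t) : ℤ)^2) =
      (p:ℤ) * ((p:ℤ)^2 * (f p l1 (l2-1) (l3-1) : ℤ)^2
        + (p:ℤ) * (f p (l1-1) l2 (l3-1) : ℤ)^2
        + (f p (l1-1) (l2-1) l3 : ℤ)^2) := by
    have hv : ∀ t : PAR p, mub p (lineMap p t) = (p : ℤ) := mub_line hp
    simp only [Fintype.sum_sum_type]
    have e1 : ∀ t : ZMod p × ZMod p, SS (lineMap p (Sum.inl t)) = f p l1 (l2-1) (l3-1) :=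
      fun t => comap_card_L1 hp hna hnb hnc h12 h23 t.1 t.2
    have e2 : ∀ γ : ZMod p, SS (lineMap p (Sum.inr (Sum.inl γ))) = f p (l1-1) l2 (l3-1) :=
      fun γ => comap_card_L2 hp hna hnb hnc h23 γ
    have e3 : ∀ u : Unit, SS (lineMap p (Sum.inr (Sum.inr u))) = f p (l1-1) (l2-1) l3 :=
      fun u => comap_card_L3 hp hna hnb hnc
    have hs1 : (∑ t : ZMod p × ZMod p,
        mub p (lineMap p (Sum.inl t)) * (SS (lineMap p (Sum.inl t)) : ℤ)^2) =
        ∑ _t : ZMod p × ZMod p, (p:ℤ) * (f p l1 (l2-1) (l3-1) : ℤ)^2 :=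
      Finset.sum_congr rfl (fun t _ => by rw [hv, e1])
    have hs2 : (∑ γ : ZMod p,
        mub p (lineMap p (Sum.inr (Sum.inl γ))) * (SS (lineMap p (Sum.inr (Sum.inl γ))) : ℤ)^2) =
        ∑ _γ : ZMod p, (p:ℤ) * (f p (l1-1) l2 (l3-1) : ℤ)^2 :=
      Finset.sum_congr rfl (fun γ _ => by rw [hv, e2])
    have hs3 : (∑ u : Unit,
        mub p (lineMap p (Sum.inr (Sum.inr u))) * (SS (lineMap p (Sum.inr (Sum.inr u))) : ℤ)^2) =
        ∑ _u : Unit, (p:ℤ) * (f p (l1-1) (l2-1) l3 : ℤ)^2 :=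
      Finset.sum_congr rfl (fun u _ => by rw [hv, e3])
    rw [hs1, hs2, hs3, Finset.sum_const, Finset.sum_const, Finset.sum_const]
    simp only [Finset.card_univ, Fintype.card_prod, ZMod.card, Fintype.card_unit, nsmul_eq_mul]
    push_cast
    ring
  have hplanes : (∑ t : PAR p, mub p (planeMap p t) * (SS (planeMap p t) : ℤ)^2) =
      -((p:ℤ)^2 * (f p l1 l2 (l3-1) : ℤ)^2
        + (p:ℤ) * (f p l1 (l2-1) l3 : ℤ)^2
        + (f p (l1-1) l2 l3 : ℤ)^2) := by
    have hv : ∀ t : PAR p, mub p (planeMap p t) = (-1 : ℤ) := mub_plane hp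
    simp only [Fintype.sum_sum_type]
    have e1 : ∀ t : ZMod p × ZMod p, SS (planeMap p (Sum.inl t)) = f p l1 l2 (l3-1) :=
      fun t => comap_card_P12 hp hna hnb hnc h12 h23 t.1 t.2
    have e2 : ∀ α : ZMod p, SS (planeMap p (Sum.inr (Sum.inl α))) = f p l1 (l2-1) l3 :=
      fun α => comap_card_P13 hp hna hnb hnc h12 α
    have e3 : ∀ u : Unit, SS (planeMap p (Sum.inr (Sum.inr u))) = f p (l1-1) l2 l3 :=
      fun u => comap_card_P23 hp hna hnb hnc
    have hs1 : (∑ t : ZMod p × ZMod p,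
        mub p (planeMap p (Sum.inl t)) * (SS (planeMap p (Sum.inl t)) : ℤ)^2) =
        ∑ _t : ZMod p × ZMod p, (-1:ℤ) * (f p l1 l2 (l3-1) : ℤ)^2 :=
      Finset.sum_congr rfl (fun t _ => by rw [hv, e1])
    have hs2 : (∑ α : ZMod p,
        mub p (planeMap p (Sum.inr (Sum.inl α))) * (SS (planeMap p (Sum.inr (Sum.inl α))) : ℤ)^2) =
        ∑ _α : ZMod p, (-1:ℤ) * (f p l1 (l2-1) l3 : ℤ)^2 :=
      Finset.sum_congr rfl (fun α _ => by rw [hv, e2])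
    have hs3 : (∑ u : Unit,
        mub p (planeMap p (Sum.inr (Sum.inr u))) * (SS (planeMap p (Sum.inr (Sum.inr u))) : ℤ)^2) =
        ∑ _u : Unit, (-1:ℤ) * (f p (l1-1) l2 l3 : ℤ)^2 :=
      Finset.sum_congr rfl (fun u _ => by rw [hv, e3])
    rw [hs1, hs2, hs3, Finset.sum_const, Finset.sum_const, Finset.sum_const]
    simp only [Finset.card_univ, Fintype.card_prod, ZMod.card, Fintype.card_unit, nsmul_eq_mul]
    push_cast
    ring
  rw [hlines, hplanes, hSbot, hStop, mub_bot hp, mub_top hp]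
  push_cast
  ring
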